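/- arXiv:1306.5616 — 3 statements merged into one kernel-verified Lean document; each statement's English description precedes it below -/
import Mathlib

section
/- Let z : [0,1] → ℝ be of class H² (i.e. z and z' are absolutely continuous on [0,1] and z'' is square-integrable) with z(0) = z(1) = 0 and z'(0) = 0. Then for every α ∈ [-2, 2), the integral ∫₀¹ x^α z'(x)² dx is finite and ((1-α)²/4) ∫₀¹ x^(α-2) z(x)² dx ≤ ∫₀¹ x^α z'(x)² dx. -/
open MeasureTheory Set Filter

lemma cs_mul_integrable {s : Set ℝ} {u v : ℝ → ℝ}
    (hu : IntegrableOn (fun x => u x ^ 2) s) (hv : IntegrableOn (fun x => v x ^ 2) s)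
    (hmu : AEStronglyMeasurable u (volume.restrict s))
    (hmv : AEStronglyMeasurable v (volume.restrict s)) :
    IntegrableOn (fun x => u x * v x) s := by
  refine Integrable.mono' ((hu.add hv).div_const 2) (hmu.mul hmv) ?_
  filter_upwards with x
  simp only [Pi.add_apply, Pi.div_apply]
  have h1 := sq_nonneg (u x + v x); have h2 := sq_nonneg (u x - v x)
  rw [Real.norm_eq_abs, abs_le]
  constructor
  · nlinarith
  · nlinarith

lemma cs_integral {s : Set ℝ} {u v : ℝ → ℝ}
    (hu : IntegrableOn (fun x => u x ^ 2) s) (hv : IntegrableOn (fun x => v x ^ 2) s)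
    (hmu : AEStronglyMeasurable u (volume.restrict s))
    (hmv : AEStronglyMeasurable v (volume.restrict s)) :
    (∫ x in s, u x * v x) ^ 2 ≤ (∫ x in s, u x ^ 2) * (∫ x in s, v x ^ 2) := by
  have huv := cs_mul_integrable hu hv hmu hmv
  set A := ∫ x in s, u x ^ 2 with hA
  set B := ∫ x in s, u x * v x with hB
  set C := ∫ x in s, v x ^ 2 with hC
  have key : ∀ lam : ℝ, 0 ≤ A * (lam * lam) + (2 * B) * lam + C := by
    intro lam
    have h0 : 0 ≤ ∫ x in s, (lam * u x + v x) ^ 2 :=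
      integral_nonneg fun x => sq_nonneg _
    have hexp : ∫ x in s, (lam * u x + v x) ^ 2
        = lam ^ 2 * A + 2 * lam * B + C := by
      have e1 : ∫ x in s, (lam * u x + v x) ^ 2
          = ∫ x in s, (lam ^ 2 * u x ^ 2 + 2 * lam * (u x * v x) + v x ^ 2) :=
        integral_congr_ae (by filter_upwards with x; ring)
      have hf1 : IntegrableOn (fun x => lam ^ 2 * u x ^ 2) s := hu.const_mul _
      have hf2 : IntegrableOn (fun x => 2 * lam * (u x * v x)) s := huv.const_mul _
      have hf12 : IntegrableOn (fun x => lam ^ 2 * u x ^ 2 + 2 * lam * (u x * v x)) s :=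
        hf1.add hf2
      rw [e1, integral_add hf12 hv, integral_add hf1 hf2, integral_const_mul,
        integral_const_mul, hA, hB, hC]
    rw [hexp] at h0
    nlinarith [h0]
  have hd := discrim_le_zero key
  rw [discrim] at hd
  nlinarith [hd]

lemma swap_weight {a b : ℝ} {w g : ℝ → ℝ}
    (hw : IntegrableOn w (Ioc a b)) (hg : IntegrableOn g (Ioc a b)) :
    ∫ x in Ioc a b, w x * (∫ t in Ioc a x, g t)
      = ∫ t in Ioc a b, g t * (∫ x in Ioc t b, w x) := by
  set μ := volume.restrict (Ioc a b) with hμ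
  have hmeas : MeasurableSet {p : ℝ × ℝ | p.2 ≤ p.1} :=
    measurableSet_le measurable_snd measurable_fst
  set H : ℝ × ℝ → ℝ := ({p : ℝ × ℝ | p.2 ≤ p.1}).indicator (fun p => w p.1 * g p.2) with hH
  have hHint : Integrable H (μ.prod μ) := (Integrable.mul_prod hw hg).indicator hmeas
  have hswap := integral_integral_swap (f := fun x t => H (x, t)) hHint
  have hL : ∫ x, (∫ t, H (x, t) ∂μ) ∂μ = ∫ x in Ioc a b, w x * (∫ t in Ioc a x, g t) := by
    rw [hμ]
    refine setIntegral_congr_fun measurableSet_Ioc (fun x hx => ?_)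
    have e1 : (fun t => H (x, t)) = (Iic x).indicator (fun t => w x * g t) := by
      funext t
      by_cases h : t ≤ x
      · simp [hH, indicator_of_mem, h, mem_Iic]
      · simp [hH, indicator_of_notMem, h, mem_Iic]
    rw [e1, integral_indicator measurableSet_Iic,
      Measure.restrict_restrict measurableSet_Iic]
    have e2 : Iic x ∩ Ioc a b = Ioc a x := by
      ext t; simp only [mem_inter_iff, mem_Iic, mem_Ioc]
      exact ⟨fun ⟨h1, h2, h3⟩ => ⟨h2, h1⟩, fun ⟨h1, h2⟩ => ⟨h2, h1, h2.trans hx.2⟩⟩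
    rw [e2, integral_const_mul]
  have hR : ∫ t, (∫ x, H (x, t) ∂μ) ∂μ = ∫ t in Ioc a b, g t * (∫ x in Ioc t b, w x) := by
    rw [hμ]
    refine setIntegral_congr_fun measurableSet_Ioc (fun t ht => ?_)
    have e1 : (fun x => H (x, t)) = (Ici t).indicator (fun x => w x * g t) := by
      funext x
      by_cases h : t ≤ x
      · simp [hH, indicator_of_mem, h, mem_Ici]
      · simp [hH, indicator_of_notMem, h, mem_Ici]
    rw [e1, integral_indicator measurableSet_Ici,
      Measure.restrict_restrict measurableSet_Ici]
    have e2 : Ici t ∩ Ioc a b = Icc t b := by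
      ext x; simp only [mem_inter_iff, mem_Ici, mem_Ioc, mem_Icc]
      exact ⟨fun ⟨h1, _, h3⟩ => ⟨h1, h3⟩, fun ⟨h1, h2⟩ => ⟨h1, lt_of_lt_of_le ht.1 h1, h2⟩⟩
    rw [e2, integral_Icc_eq_integral_Ioc]
    have e3 : ∫ x in Ioc t b, w x * g t = (∫ x in Ioc t b, w x) * g t := by
      rw [← integral_mul_const]
    rw [e3, mul_comm]
  rw [← hL, ← hR, hswap]

/-- FTC for the square of a primitive, via Fubini (no differentiability needed). -/
lemma sq_FTC {c d : ℝ} (hcd : c ≤ d) {f h : ℝ → ℝ}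
    (hh : IntegrableOn h (Ioc c d))
    (hrep : ∀ x ∈ Icc c d, f x = f c + ∫ s in Ioc c x, h s) :
    f d ^ 2 = f c ^ 2 + 2 * ∫ t in Ioc c d, f t * h t := by
  set F : ℝ → ℝ := fun t => ∫ s in Ioc c t, h s with hF
  set S : ℝ := ∫ s in Ioc c d, h s with hS
  -- F is bounded on Icc c d
  have hIcc : IntegrableOn h (Icc c d) := by
    rwa [IntegrableOn, ← Measure.restrict_congr_set Ioc_ae_eq_Icc]
  have hFcont : ContinuousOn F (Icc c d) := intervalIntegral.continuousOn_primitive hIcc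
  obtain ⟨C, hC⟩ : ∃ C, ∀ x ∈ Icc c d, |F x| ≤ C := by
    obtain ⟨C, hC⟩ := (isCompact_Icc.image_of_continuousOn hFcont).isBounded.subset_closedBall 0
    exact ⟨C, fun x hx => by
      have := hC (mem_image_of_mem F hx); simpa [Metric.mem_closedBall, Real.dist_eq] using this⟩
  -- integrability of h * F
  have hFmeas : AEStronglyMeasurable F (volume.restrict (Ioc c d)) :=
    (hFcont.mono Ioc_subset_Icc_self).aestronglyMeasurable measurableSet_Ioc
  have hhF : IntegrableOn (fun t => h t * F t) (Ioc c d) := by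
    refine Integrable.mono' (hh.norm.const_mul C) (hh.aestronglyMeasurable.mul hFmeas) ?_
    rw [ae_restrict_iff' measurableSet_Ioc]
    filter_upwards with t ht
    rw [norm_mul, Real.norm_eq_abs, Real.norm_eq_abs]
    calc |h t| * |F t| ≤ |h t| * C := by
          refine mul_le_mul_of_nonneg_left (hC t (Ioc_subset_Icc_self ht)) (abs_nonneg _)
      _ = C * |h t| := mul_comm _ _
  -- Fubini : T = S^2 - T
  have hsplit : ∀ t ∈ Ioc c d, (∫ x in Ioc t d, h x) = S - F t := by
    intro t ht
    have : S = F t + ∫ x in Ioc t d, h x := by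
      rw [hS, hF, ← setIntegral_union (Ioc_disjoint_Ioc_of_le le_rfl) measurableSet_Ioc
        (hh.mono_set (Ioc_subset_Ioc_right ht.2)) (hh.mono_set (Ioc_subset_Ioc_left ht.1.le)),
        Ioc_union_Ioc_eq_Ioc ht.1.le ht.2]
    linarith
  have hswap := swap_weight (a := c) (b := d) hh hh
  have hRHS : ∫ t in Ioc c d, h t * (∫ x in Ioc t d, h x) = S * S - ∫ t in Ioc c d, h t * F t := by
    have e1 : ∫ t in Ioc c d, h t * (∫ x in Ioc t d, h x)
        = ∫ t in Ioc c d, (S * h t - h t * F t) := by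
      refine setIntegral_congr_fun measurableSet_Ioc (fun t ht => ?_)
      rw [hsplit t ht]; ring
    rw [e1, integral_sub (hh.const_mul S) hhF, integral_const_mul, ← hS]
  have hT : ∫ t in Ioc c d, h t * F t = S * S / 2 := by
    have := hswap.trans hRHS
    linarith
  -- now conclude
  have hfd : f d = f c + S := hrep d ⟨hcd, le_rfl⟩
  have e2 : ∫ t in Ioc c d, f t * h t = f c * S + S * S / 2 := by
    have e3 : ∫ t in Ioc c d, f t * h t = ∫ t in Ioc c d, (f c * h t + h t * F t) := by
      refine setIntegral_congr_fun measurableSet_Ioc (fun t ht => ?_)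
      rw [hrep t (Ioc_subset_Icc_self ht)]; ring
    rw [e3, integral_add (hh.const_mul _) hhF, integral_const_mul, hT, ← hS]
  rw [e2, hfd]; ring

/-- continuous-on-compact times integrable is integrable -/
lemma contOn_mul_integrableOn {c d : ℝ} {φ h : ℝ → ℝ} (hφ : ContinuousOn φ (Icc c d))
    (hh : IntegrableOn h (Ioc c d)) : IntegrableOn (fun t => φ t * h t) (Ioc c d) := by
  obtain ⟨C, hC⟩ : ∃ C, ∀ x ∈ Icc c d, |φ x| ≤ C := by
    obtain ⟨C, hC⟩ := (isCompact_Icc.image_of_continuousOn hφ).isBounded.subset_closedBall 0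
    exact ⟨C, fun x hx => by
      have := hC (mem_image_of_mem φ hx); simpa [Metric.mem_closedBall, Real.dist_eq] using this⟩
  have hφmeas : AEStronglyMeasurable φ (volume.restrict (Ioc c d)) :=
    (hφ.mono Ioc_subset_Icc_self).aestronglyMeasurable measurableSet_Ioc
  refine Integrable.mono' (hh.norm.const_mul C) (hφmeas.mul hh.aestronglyMeasurable) ?_
  rw [ae_restrict_iff' measurableSet_Ioc]
  filter_upwards with t ht
  rw [norm_mul, Real.norm_eq_abs, Real.norm_eq_abs]
  exact mul_le_mul_of_nonneg_right (hC t (Ioc_subset_Icc_self ht)) (abs_nonneg _)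

/-- difference form of the integral representation -/
lemma rep_sub {f h : ℝ → ℝ} (hh : IntegrableOn h (Ioc 0 1))
    (hrep : ∀ x ∈ Icc (0:ℝ) 1, f x = f 0 + ∫ s in Ioc 0 x, h s) :
    ∀ ε x : ℝ, 0 ≤ ε → ε ≤ x → x ≤ 1 → f x = f ε + ∫ s in Ioc ε x, h s := by
  intro ε x hε hεx hx1
  have h1 := hrep x ⟨hε.trans hεx, hx1⟩
  have h2 := hrep ε ⟨hε, hεx.trans hx1⟩
  have hsplit : ∫ s in Ioc 0 x, h s = (∫ s in Ioc 0 ε, h s) + ∫ s in Ioc ε x, h s := by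
    rw [← setIntegral_union (Ioc_disjoint_Ioc_of_le le_rfl) measurableSet_Ioc
      (hh.mono_set (Ioc_subset_Ioc_right (hεx.trans hx1)))
      (hh.mono_set (Ioc_subset_Ioc (le_refl _) hx1 |>.trans (Ioc_subset_Ioc_left hε))),
      Ioc_union_Ioc_eq_Ioc hε hεx]
  rw [h1, hsplit]; linarith [h2]

lemma key_identity {β : ℝ} (hβ : β ≠ 1) {ε : ℝ} (hε : 0 < ε) (hε1 : ε ≤ 1)
    {f h : ℝ → ℝ} (hh : IntegrableOn h (Ioc 0 1))
    (hrep : ∀ x ∈ Set.Icc (0:ℝ) 1, f x = f 0 + ∫ s in Ioc 0 x, h s) :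
    (∫ x in Ioc ε 1, x ^ (β - 2) * f x ^ 2) * (1 - β)
      = 2 * (∫ t in Ioc ε 1, t ^ (β - 1) * (f t * h t))
        + (ε ^ (β - 1) * f ε ^ 2 - f 1 ^ 2) := by
  have hβ' : β - 1 ≠ 0 := sub_ne_zero.mpr hβ
  -- continuity of f on [0,1]
  have hhIcc : IntegrableOn h (Icc 0 1) := by
    rwa [IntegrableOn, ← Measure.restrict_congr_set Ioc_ae_eq_Icc]
  have hfc : ContinuousOn f (Icc 0 1) := by
    have : ContinuousOn (fun x => f 0 + ∫ s in Ioc 0 x, h s) (Icc 0 1) :=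
      continuousOn_const.add (intervalIntegral.continuousOn_primitive hhIcc)
    exact ContinuousOn.congr this hrep
  have hfcε : ContinuousOn f (Icc ε 1) := hfc.mono (Icc_subset_Icc hε.le le_rfl)
  have hhε : IntegrableOn h (Ioc ε 1) := hh.mono_set (Ioc_subset_Ioc_left hε.le)
  have hfh : IntegrableOn (fun t => f t * h t) (Ioc ε 1) := contOn_mul_integrableOn hfcε hhε
  have hfhIcc : IntegrableOn (fun t => f t * h t) (Icc ε 1) := by
    rwa [IntegrableOn, ← Measure.restrict_congr_set Ioc_ae_eq_Icc]
  -- weight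
  have hwcont : ContinuousOn (fun x : ℝ => x ^ (β - 2)) (Icc ε 1) :=
    continuousOn_id.rpow_const fun x hx => Or.inl (ne_of_gt (lt_of_lt_of_le hε hx.1))
  have hwint : IntegrableOn (fun x : ℝ => x ^ (β - 2)) (Ioc ε 1) :=
    (hwcont.integrableOn_Icc).mono_set Ioc_subset_Icc_self
  -- primitive of f*h
  set G : ℝ → ℝ := fun x => ∫ t in Ioc ε x, f t * h t with hG
  have hGcont : ContinuousOn G (Icc ε 1) := intervalIntegral.continuousOn_primitive hfhIcc
  have hwG : IntegrableOn (fun x => x ^ (β - 2) * G x) (Ioc ε 1) := by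
    have := contOn_mul_integrableOn hGcont hwint
    refine this.congr_fun (fun x hx => mul_comm _ _) measurableSet_Ioc
  -- step 1 : pointwise square identity
  have step1 : ∀ x ∈ Ioc ε 1, f x ^ 2 = f ε ^ 2 + 2 * G x := by
    intro x hx
    exact sq_FTC hx.1.le (hhε.mono_set (Ioc_subset_Ioc_right hx.2))
      (fun y hy => rep_sub hh hrep ε y hε.le hy.1 (hy.2.trans hx.2))
  -- step 2 : expand the integral
  have step2 : ∫ x in Ioc ε 1, x ^ (β - 2) * f x ^ 2
      = f ε ^ 2 * (∫ x in Ioc ε 1, x ^ (β - 2)) + 2 * ∫ x in Ioc ε 1, x ^ (β - 2) * G x := by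
    have e1 : ∫ x in Ioc ε 1, x ^ (β - 2) * f x ^ 2
        = ∫ x in Ioc ε 1, (f ε ^ 2 * x ^ (β - 2) + 2 * (x ^ (β - 2) * G x)) := by
      refine setIntegral_congr_fun measurableSet_Ioc (fun x hx => ?_)
      rw [step1 x hx]; ring
    rw [e1, integral_add (hwint.const_mul _) (hwG.const_mul _), integral_const_mul,
      integral_const_mul]
  -- step 3+4 : swap and compute the weight integral
  have hW : ∀ t : ℝ, 0 < t → t ≤ 1 →
      (∫ x in Ioc t 1, x ^ (β - 2)) = (1 - t ^ (β - 1)) / (β - 1) := by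
    intro t ht ht1
    rw [← intervalIntegral.integral_of_le ht1,
      integral_rpow (Or.inr ⟨by intro hc; apply hβ'; linarith,
        by rw [Set.uIcc_of_le ht1]; exact fun hc => absurd hc.1 (not_le.mpr ht)⟩)]
    rw [show β - 2 + 1 = β - 1 by ring, Real.one_rpow]
  have step3 : ∫ x in Ioc ε 1, x ^ (β - 2) * G x
      = ∫ t in Ioc ε 1, (f t * h t) * ((1 - t ^ (β - 1)) / (β - 1)) := by
    rw [hG]
    have := swap_weight (a := ε) (b := 1) hwint hfh
    rw [this]
    refine setIntegral_congr_fun measurableSet_Ioc (fun t ht => ?_)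
    rw [hW t (hε.trans ht.1) ht.2]
  -- step 5 : split
  have hXint : IntegrableOn (fun t => t ^ (β - 1) * (f t * h t)) (Ioc ε 1) := by
    refine contOn_mul_integrableOn ?_ hfh
    exact continuousOn_id.rpow_const fun x hx => Or.inl (ne_of_gt (lt_of_lt_of_le hε hx.1))
  have step5 : ∫ t in Ioc ε 1, (f t * h t) * ((1 - t ^ (β - 1)) / (β - 1))
      = (1 / (β - 1)) * (∫ t in Ioc ε 1, f t * h t)
        - (1 / (β - 1)) * ∫ t in Ioc ε 1, t ^ (β - 1) * (f t * h t) := by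
    have e1 : ∫ t in Ioc ε 1, (f t * h t) * ((1 - t ^ (β - 1)) / (β - 1))
        = ∫ t in Ioc ε 1, ((1 / (β - 1)) * (f t * h t)
            - (1 / (β - 1)) * (t ^ (β - 1) * (f t * h t))) := by
      refine setIntegral_congr_fun measurableSet_Ioc (fun t ht => ?_)
      field_simp
    rw [e1, integral_sub (hfh.const_mul _) (hXint.const_mul _), integral_const_mul,
      integral_const_mul]
  -- step 6 : total integral of f*h
  have step6 : ∫ t in Ioc ε 1, f t * h t = (f 1 ^ 2 - f ε ^ 2) / 2 := by
    have := sq_FTC hε1 hhε (fun y hy => rep_sub hh hrep ε y hε.le hy.1 hy.2)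
    linarith
  -- final algebra
  rw [step2, step3, step5, step6, hW ε hε hε1]
  field_simp
  ring

/-- scalar quadratic solving step -/
lemma quad_solve {c I ρ Jr : ℝ} (hc : 0 < c) (hI : 0 ≤ I) (hρ : 0 ≤ ρ) (hJ : 0 ≤ Jr)
    (hquad : c * I ≤ 2 * (Real.sqrt I * Real.sqrt Jr) + ρ) :
    (c ^ 2 / 4) * I ≤ (Real.sqrt Jr + Real.sqrt (c * ρ) / 2) ^ 2 := by
  set s := Real.sqrt I with hsdef
  set B := Real.sqrt Jr with hBdef
  set q := Real.sqrt (c * ρ) with hqdef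
  have hs0 : 0 ≤ s := Real.sqrt_nonneg _
  have hB0 : 0 ≤ B := Real.sqrt_nonneg _
  have hq0 : 0 ≤ q := Real.sqrt_nonneg _
  have hs2 : s ^ 2 = I := Real.sq_sqrt hI
  have hq2 : q ^ 2 = c * ρ := Real.sq_sqrt (mul_nonneg hc.le hρ)
  have hcquad : c ^ 2 * s ^ 2 ≤ 2 * B * (c * s) + q ^ 2 := by
    have h2 := mul_le_mul_of_nonneg_left hquad hc.le
    nlinarith [h2]
  have hu : c * s ≤ 2 * B + q := by
    by_contra hcon
    push_neg at hcon
    nlinarith [mul_pos (show (0:ℝ) < c * s - 2 * B - q by linarith)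
      (show (0:ℝ) < c * s + q by nlinarith), mul_nonneg hB0 hq0]
  calc (c ^ 2 / 4) * I = (c * s) ^ 2 / 4 := by rw [← hs2]; ring
    _ ≤ (2 * B + q) ^ 2 / 4 := by nlinarith [mul_self_le_mul_self (by positivity) hu]
    _ = (B + q / 2) ^ 2 := by ring

/-- Core weighted Hardy inequality. -/
lemma core_hardy {β : ℝ} (hβ : β ≠ 1) {f h : ℝ → ℝ}
    (hbd : β ≤ 1 ∨ f 1 = 0)
    (hh : IntegrableOn h (Ioc 0 1)) (hsq : IntegrableOn (fun t => h t ^ 2) (Ioc 0 1))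
    (hrep : ∀ x ∈ Icc (0:ℝ) 1, f x = f 0 + ∫ s in Ioc 0 x, h s)
    (hdecay : Tendsto (fun ε : ℝ => ε ^ (β - 1) * f ε ^ 2) (nhdsWithin 0 (Ioo 0 1)) (nhds 0)) :
    ENNReal.ofReal ((1 - β) ^ 2 / 4)
        * (∫⁻ x in Ioo (0:ℝ) 1, ENNReal.ofReal (x ^ (β - 2) * f x ^ 2))
      ≤ ∫⁻ x in Ioo (0:ℝ) 1, ENNReal.ofReal (x ^ β * h x ^ 2) := by
  by_cases hT : (∫⁻ x in Ioo (0:ℝ) 1, ENNReal.ofReal (x ^ β * h x ^ 2)) = ⊤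
  · rw [hT]; exact le_top
  set T := ∫⁻ x in Ioo (0:ℝ) 1, ENNReal.ofReal (x ^ β * h x ^ 2) with hTdef
  set Jr := T.toReal with hJrdef
  have hJr0 : 0 ≤ Jr := ENNReal.toReal_nonneg
  have h1β : (1:ℝ) - β ≠ 0 := sub_ne_zero.2 (Ne.symm hβ)
  have hc : 0 < |1 - β| := abs_pos.2 h1β
  -- continuity of f
  have hhIcc : IntegrableOn h (Icc 0 1) := by
    rwa [IntegrableOn, ← Measure.restrict_congr_set Ioc_ae_eq_Icc]
  have hfc : ContinuousOn f (Icc 0 1) := by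
    have : ContinuousOn (fun x => f 0 + ∫ s in Ioc 0 x, h s) (Icc 0 1) :=
      continuousOn_const.add (intervalIntegral.continuousOn_primitive hhIcc)
    exact ContinuousOn.congr this hrep
  -- integrability of the weighted integrands, for each ε
  have hIint : ∀ ε : ℝ, 0 < ε →
      IntegrableOn (fun x : ℝ => x ^ (β - 2) * f x ^ 2) (Ioc ε 1) := by
    intro ε hε
    have hfcε : ContinuousOn f (Icc ε 1) := hfc.mono (Icc_subset_Icc hε.le le_rfl)
    exact (((continuousOn_id.rpow_const fun x hx =>
      Or.inl (ne_of_gt (lt_of_lt_of_le hε hx.1))).mul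
        (hfcε.pow 2)).integrableOn_Icc).mono_set Ioc_subset_Icc_self
  have hInn : ∀ ε : ℝ, 0 < ε → 0 ≤ ∫ x in Ioc ε 1, x ^ (β - 2) * f x ^ 2 := by
    intro ε hε
    exact setIntegral_nonneg measurableSet_Ioc fun x hx =>
      mul_nonneg (Real.rpow_nonneg (hε.trans hx.1).le _) (sq_nonneg _)
  -- the main estimate for fixed ε
  have main : ∀ ε : ℝ, 0 < ε → ε ≤ 1 →
      ((1 - β) ^ 2 / 4) * (∫ x in Ioc ε 1, x ^ (β - 2) * f x ^ 2)
        ≤ (Real.sqrt Jr + Real.sqrt (|1 - β| * (ε ^ (β - 1) * f ε ^ 2)) / 2) ^ 2 := by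
    intro ε hε hε1
    have hfcε : ContinuousOn f (Icc ε 1) := hfc.mono (Icc_subset_Icc hε.le le_rfl)
    have hhε : IntegrableOn h (Ioc ε 1) := hh.mono_set (Ioc_subset_Ioc_left hε.le)
    have hrw : ∀ (γ : ℝ), ContinuousOn (fun x : ℝ => x ^ γ) (Icc ε 1) := fun γ =>
      continuousOn_id.rpow_const fun x hx => Or.inl (ne_of_gt (lt_of_lt_of_le hε hx.1))
    have hρnn : 0 ≤ ε ^ (β - 1) * f ε ^ 2 :=
      mul_nonneg (Real.rpow_nonneg hε.le _) (sq_nonneg _)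
    have hJint : IntegrableOn (fun x : ℝ => x ^ β * h x ^ 2) (Ioc ε 1) :=
      contOn_mul_integrableOn (hrw _) (hsq.mono_set (Ioc_subset_Ioc_left hε.le))
    have hJnn : 0 ≤ ∫ x in Ioc ε 1, x ^ β * h x ^ 2 := setIntegral_nonneg
      measurableSet_Ioc fun x hx =>
        mul_nonneg (Real.rpow_nonneg (hε.trans hx.1).le _) (sq_nonneg _)
    -- Jε ≤ Jr
    have hJεJr : (∫ x in Ioc ε 1, x ^ β * h x ^ 2) ≤ Jr := by
      have hnn : 0 ≤ᵐ[volume.restrict (Ioc ε 1)] fun x => x ^ β * h x ^ 2 := by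
        filter_upwards [ae_restrict_mem measurableSet_Ioc] with x hx
        exact mul_nonneg (Real.rpow_nonneg (hε.trans hx.1).le _) (sq_nonneg _)
      have e1 : ENNReal.ofReal (∫ x in Ioc ε 1, x ^ β * h x ^ 2)
          = ∫⁻ x in Ioc ε 1, ENNReal.ofReal (x ^ β * h x ^ 2) :=
        ofReal_integral_eq_lintegral_ofReal hJint hnn
      have e2 : (∫⁻ x in Ioc ε 1, ENNReal.ofReal (x ^ β * h x ^ 2)) ≤ T := by
        rw [← Measure.restrict_congr_set Ioo_ae_eq_Ioc]
        exact lintegral_mono_set (Ioo_subset_Ioo_left hε.le)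
      calc (∫ x in Ioc ε 1, x ^ β * h x ^ 2)
          = (ENNReal.ofReal (∫ x in Ioc ε 1, x ^ β * h x ^ 2)).toReal :=
            (ENNReal.toReal_ofReal hJnn).symm
        _ ≤ T.toReal := ENNReal.toReal_mono hT (e1 ▸ e2)
    -- Cauchy–Schwarz
    have hCS : (∫ t in Ioc ε 1, t ^ (β - 1) * (f t * h t)) ^ 2
        ≤ (∫ x in Ioc ε 1, x ^ (β - 2) * f x ^ 2) * ∫ x in Ioc ε 1, x ^ β * h x ^ 2 := by
      have hu2 : IntegrableOn (fun t : ℝ => (t ^ ((β - 2) / 2) * f t) ^ 2) (Ioc ε 1) := by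
        refine (hIint ε hε).congr_fun (fun t ht => ?_) measurableSet_Ioc
        have ht0 : (0:ℝ) < t := hε.trans ht.1
        rw [mul_pow, ← Real.rpow_natCast (t ^ ((β - 2) / 2)) 2, ← Real.rpow_mul ht0.le]
        norm_num
      have hv2 : IntegrableOn (fun t : ℝ => (t ^ (β / 2) * h t) ^ 2) (Ioc ε 1) := by
        refine hJint.congr_fun (fun t ht => ?_) measurableSet_Ioc
        have ht0 : (0:ℝ) < t := hε.trans ht.1
        rw [mul_pow, ← Real.rpow_natCast (t ^ (β / 2)) 2, ← Real.rpow_mul ht0.le]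
        norm_num
      have hmu : AEStronglyMeasurable (fun t : ℝ => t ^ ((β - 2) / 2) * f t)
          (volume.restrict (Ioc ε 1)) :=
        (((hrw _).mul hfcε).mono Ioc_subset_Icc_self).aestronglyMeasurable measurableSet_Ioc
      have hmv : AEStronglyMeasurable (fun t : ℝ => t ^ (β / 2) * h t)
          (volume.restrict (Ioc ε 1)) :=
        ((((hrw _).mono Ioc_subset_Icc_self).aestronglyMeasurable
          measurableSet_Ioc).mul hhε.aestronglyMeasurable)
      have hcs := cs_integral hu2 hv2 hmu hmv
      have e1 : ∫ x in Ioc ε 1, (x ^ ((β - 2) / 2) * f x) * (x ^ (β / 2) * h x)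
          = ∫ t in Ioc ε 1, t ^ (β - 1) * (f t * h t) := by
        refine setIntegral_congr_fun measurableSet_Ioc (fun t ht => ?_)
        have ht0 : (0:ℝ) < t := hε.trans ht.1
        rw [show t ^ ((β - 2) / 2) * f t * (t ^ (β / 2) * h t)
            = t ^ ((β - 2) / 2) * t ^ (β / 2) * (f t * h t) by ring,
          ← Real.rpow_add ht0, show (β - 2) / 2 + β / 2 = β - 1 by ring]
      have e2 : ∫ x in Ioc ε 1, (x ^ ((β - 2) / 2) * f x) ^ 2
          = ∫ x in Ioc ε 1, x ^ (β - 2) * f x ^ 2 := by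
        refine setIntegral_congr_fun measurableSet_Ioc (fun t ht => ?_)
        have ht0 : (0:ℝ) < t := hε.trans ht.1
        rw [mul_pow, ← Real.rpow_natCast (t ^ ((β - 2) / 2)) 2, ← Real.rpow_mul ht0.le]
        norm_num
      have e3 : ∫ x in Ioc ε 1, (x ^ (β / 2) * h x) ^ 2
          = ∫ x in Ioc ε 1, x ^ β * h x ^ 2 := by
        refine setIntegral_congr_fun measurableSet_Ioc (fun t ht => ?_)
        have ht0 : (0:ℝ) < t := hε.trans ht.1
        rw [mul_pow, ← Real.rpow_natCast (t ^ (β / 2)) 2, ← Real.rpow_mul ht0.le]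
        norm_num
      rwa [e1, e2, e3] at hcs
    -- |Xε| ≤ √Iε √Jr
    have habs : |∫ t in Ioc ε 1, t ^ (β - 1) * (f t * h t)|
        ≤ Real.sqrt (∫ x in Ioc ε 1, x ^ (β - 2) * f x ^ 2) * Real.sqrt Jr := by
      rw [← Real.sqrt_sq_eq_abs]
      calc Real.sqrt ((∫ t in Ioc ε 1, t ^ (β - 1) * (f t * h t)) ^ 2)
          ≤ Real.sqrt ((∫ x in Ioc ε 1, x ^ (β - 2) * f x ^ 2)
              * ∫ x in Ioc ε 1, x ^ β * h x ^ 2) := Real.sqrt_le_sqrt hCS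
        _ = Real.sqrt (∫ x in Ioc ε 1, x ^ (β - 2) * f x ^ 2)
              * Real.sqrt (∫ x in Ioc ε 1, x ^ β * h x ^ 2) := Real.sqrt_mul (hInn ε hε) _
        _ ≤ Real.sqrt (∫ x in Ioc ε 1, x ^ (β - 2) * f x ^ 2) * Real.sqrt Jr :=
            mul_le_mul_of_nonneg_left (Real.sqrt_le_sqrt hJεJr) (Real.sqrt_nonneg _)
    -- quadratic inequality
    have hkey := key_identity hβ hε hε1 hh hrep
    have hquad : |1 - β| * (∫ x in Ioc ε 1, x ^ (β - 2) * f x ^ 2)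
        ≤ 2 * (Real.sqrt (∫ x in Ioc ε 1, x ^ (β - 2) * f x ^ 2) * Real.sqrt Jr)
          + ε ^ (β - 1) * f ε ^ 2 := by
      have hXabs1 : (∫ t in Ioc ε 1, t ^ (β - 1) * (f t * h t))
          ≤ |∫ t in Ioc ε 1, t ^ (β - 1) * (f t * h t)| := le_abs_self _
      have hXabs2 : -|∫ t in Ioc ε 1, t ^ (β - 1) * (f t * h t)|
          ≤ ∫ t in Ioc ε 1, t ^ (β - 1) * (f t * h t) := neg_abs_le _
      rcases lt_or_gt_of_ne hβ with hlt | hgt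
      · have hcc : |1 - β| = 1 - β := abs_of_pos (by linarith)
        have hf1 : (0:ℝ) ≤ f 1 ^ 2 := sq_nonneg _
        rw [hcc]
        linarith [hkey, habs]
      · have hf1 : f 1 = 0 := hbd.resolve_left (not_le.2 hgt)
        have hcc : |1 - β| = -(1 - β) := abs_of_neg (by linarith)
        rw [hf1] at hkey
        rw [hcc]
        nlinarith [hkey, habs, hρnn]
    have := quad_solve hc (hInn ε hε) hρnn hJr0 hquad
    rwa [sq_abs] at this
  -- ==== the limiting argument ====
  set e : ℕ → ℝ := fun n => (1/2 : ℝ) ^ (n + 1) with hedef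
  have he_pos : ∀ n, 0 < e n := fun n => pow_pos (by norm_num) _
  have he_le1 : ∀ n, e n ≤ 1 := fun n =>
    pow_le_one₀ (by norm_num) (by norm_num)
  have he_anti : ∀ m n, m ≤ n → e n ≤ e m := fun m n hmn =>
    pow_le_pow_of_le_one (by norm_num) (by norm_num) (by omega)
  have he_tend : Tendsto e atTop (nhds 0) := by
    have h0 := tendsto_pow_atTop_nhds_zero_of_lt_one
      (by norm_num : (0:ℝ) ≤ 1/2) (by norm_num : (1/2:ℝ) < 1)
    exact h0.comp (tendsto_add_atTop_nat 1)
  set g : ℝ → ENNReal := fun x => ENNReal.ofReal (x ^ (β - 2) * f x ^ 2) with hgdef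
  -- sup identity
  have hsup : ∫⁻ x in Ioo (0:ℝ) 1, g x = ⨆ n, ∫⁻ x in Ioo (e n) 1, g x := by
    have hind : ∀ n : ℕ, AEMeasurable ((Ioo (e n) 1).indicator g) volume := by
      intro n
      rw [aemeasurable_indicator_iff measurableSet_Ioo]
      have hcont : ContinuousOn (fun x : ℝ => x ^ (β - 2) * f x ^ 2) (Ioo (e n) 1) := by
        refine ContinuousOn.mul ?_ ?_
        · exact continuousOn_id.rpow_const fun x hx =>
            Or.inl (ne_of_gt ((he_pos n).trans hx.1))
        · exact (hfc.mono fun x hx => ⟨((he_pos n).trans hx.1).le, hx.2.le⟩).pow 2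
      exact (ENNReal.continuous_ofReal.comp_continuousOn hcont).aemeasurable measurableSet_Ioo
    have hmono : ∀ x, Monotone fun n => (Ioo (e n) 1).indicator g x := by
      intro x m n hmn
      dsimp only
      by_cases hx : x ∈ Ioo (e m) 1
      · rw [Set.indicator_of_mem hx,
          Set.indicator_of_mem (Ioo_subset_Ioo_left (he_anti m n hmn) hx)]
      · rw [Set.indicator_of_notMem hx]; exact zero_le
    have hptsup : ∀ x, (⨆ n, (Ioo (e n) 1).indicator g x) = (Ioo (0:ℝ) 1).indicator g x := by
      intro x
      by_cases hx : x ∈ Ioo (0:ℝ) 1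
      · obtain ⟨n0, hn0⟩ : ∃ n, e n < x := (he_tend.eventually_lt_const hx.1).exists
        rw [Set.indicator_of_mem hx]
        refine le_antisymm (iSup_le fun n => ?_)
          (le_iSup_of_le n0 (le_of_eq (Set.indicator_of_mem (show x ∈ Ioo (e n0) 1 from ⟨hn0, hx.2⟩) g).symm))
        by_cases hxn : x ∈ Ioo (e n) 1
        · rw [Set.indicator_of_mem hxn]
        · rw [Set.indicator_of_notMem hxn]; exact zero_le
      · rw [Set.indicator_of_notMem hx]
        refine le_antisymm (iSup_le fun n => ?_) zero_le
        rw [Set.indicator_of_notMem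
          (fun hxn => hx (Ioo_subset_Ioo_left (he_pos n).le hxn))]
    calc ∫⁻ x in Ioo (0:ℝ) 1, g x
        = ∫⁻ x, (Ioo (0:ℝ) 1).indicator g x := (lintegral_indicator measurableSet_Ioo g).symm
      _ = ∫⁻ x, ⨆ n, (Ioo (e n) 1).indicator g x := by
          refine lintegral_congr fun x => (hptsup x).symm
      _ = ⨆ n, ∫⁻ x, (Ioo (e n) 1).indicator g x :=
          lintegral_iSup' hind (Filter.Eventually.of_forall hmono)
      _ = ⨆ n, ∫⁻ x in Ioo (e n) 1, g x := by
          refine iSup_congr fun n => lintegral_indicator measurableSet_Ioo g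
  -- each truncated lintegral is a real integral
  have hIoo_eq : ∀ n : ℕ, ∫⁻ x in Ioo (e n) 1, g x
      = ENNReal.ofReal (∫ x in Ioc (e n) 1, x ^ (β - 2) * f x ^ 2) := by
    intro n
    rw [Measure.restrict_congr_set Ioo_ae_eq_Ioc]
    refine (ofReal_integral_eq_lintegral_ofReal (hIint (e n) (he_pos n)) ?_).symm
    filter_upwards [ae_restrict_mem measurableSet_Ioc] with x hx
    exact mul_nonneg (Real.rpow_nonneg ((he_pos n).trans hx.1).le _) (sq_nonneg _)
  -- sequences
  set a : ℕ → ENNReal := fun n =>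
    ENNReal.ofReal ((1 - β) ^ 2 / 4) * ∫⁻ x in Ioo (e n) 1, g x with hadef
  set b : ℕ → ENNReal := fun n =>
    ENNReal.ofReal ((Real.sqrt Jr
      + Real.sqrt (|1 - β| * (e n ^ (β - 1) * f (e n) ^ 2)) / 2) ^ 2) with hbdef
  have ha_mono : Monotone a := fun m n hmn => mul_le_mul_right
    (lintegral_mono_set (Ioo_subset_Ioo_left (he_anti m n hmn))) _
  have hab : ∀ n, a n ≤ b n := by
    intro n
    rw [hadef]
    simp only []
    rw [hIoo_eq n, ← ENNReal.ofReal_mul (by positivity : (0:ℝ) ≤ (1 - β) ^ 2 / 4)]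
    exact ENNReal.ofReal_le_ofReal (main (e n) (he_pos n) (he_le1 n))
  have hatend : Tendsto a atTop (nhds (⨆ n, a n)) := tendsto_atTop_iSup ha_mono
  have hbtend : Tendsto b atTop (nhds T) := by
    have hρtend : Tendsto (fun n => e n ^ (β - 1) * f (e n) ^ 2) atTop (nhds 0) := by
      refine hdecay.comp (tendsto_nhdsWithin_of_tendsto_nhds_of_eventually_within _
        he_tend (Filter.Eventually.of_forall fun n =>
          ⟨he_pos n, by
            have : (1/2:ℝ) ^ (n+1) < 1 := pow_lt_one₀ (by norm_num) (by norm_num) (by omega)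
            simpa [hedef] using this⟩))
    have h2 : Tendsto (fun n => |1 - β| * (e n ^ (β - 1) * f (e n) ^ 2)) atTop (nhds 0) := by
      simpa using hρtend.const_mul (|1 - β|)
    have h3 : Tendsto (fun n => Real.sqrt (|1 - β| * (e n ^ (β - 1) * f (e n) ^ 2)))
        atTop (nhds 0) := by
      simpa only [Function.comp_def, Real.sqrt_zero]
        using (Real.continuous_sqrt.tendsto 0).comp h2
    have h4 : Tendsto (fun n => Real.sqrt Jr
        + Real.sqrt (|1 - β| * (e n ^ (β - 1) * f (e n) ^ 2)) / 2) atTop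
        (nhds (Real.sqrt Jr)) := by
      have := (h3.div_const 2).const_add (Real.sqrt Jr)
      simpa using this
    have h5 : Tendsto (fun n => (Real.sqrt Jr
        + Real.sqrt (|1 - β| * (e n ^ (β - 1) * f (e n) ^ 2)) / 2) ^ 2) atTop
        (nhds Jr) := by
      have := h4.pow 2
      rwa [Real.sq_sqrt hJr0] at this
    have h6 := (ENNReal.continuous_ofReal.tendsto Jr).comp h5
    rwa [hJrdef, ENNReal.ofReal_toReal hT] at h6
  have hfinal : (⨆ n, a n) ≤ T := le_of_tendsto_of_tendsto' hatend hbtend hab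
  calc ENNReal.ofReal ((1 - β) ^ 2 / 4) * (∫⁻ x in Ioo (0:ℝ) 1, g x)
      = ENNReal.ofReal ((1 - β) ^ 2 / 4) * ⨆ n, ∫⁻ x in Ioo (e n) 1, g x := by rw [hsup]
    _ = ⨆ n, a n := by rw [ENNReal.mul_iSup]
    _ ≤ T := hfinal

/-- Cauchy–Schwarz for a primitive -/
lemma prim_sq_le {ψ : ℝ → ℝ} (hψ : IntegrableOn ψ (Ioc 0 1))
    (hψsq : IntegrableOn (fun t => ψ t ^ 2) (Ioc 0 1)) {x : ℝ} (hx : 0 < x) (hx1 : x ≤ 1) :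
    (∫ t in Ioc 0 x, ψ t) ^ 2 ≤ x * ∫ t in Ioc 0 x, ψ t ^ 2 := by
  have h1int : IntegrableOn (fun t : ℝ => (1:ℝ) ^ 2) (Ioc 0 x) := by
    simpa using (integrableOn_const.mpr (Or.inr measure_Ioc_lt_top) :
      IntegrableOn (fun _ : ℝ => (1:ℝ)) (Ioc 0 x))
  have hcs := cs_integral (s := Ioc 0 x) (u := fun _ => (1:ℝ)) (v := ψ) h1int
    (hψsq.mono_set (Ioc_subset_Ioc_right hx1))
    aestronglyMeasurable_const
    (hψ.mono_set (Ioc_subset_Ioc_right hx1)).aestronglyMeasurable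
  simp only [one_mul, one_pow] at hcs
  rw [setIntegral_const, Real.volume_real_Ioc_of_le hx.le, smul_eq_mul, mul_one, sub_zero] at hcs
  exact hcs

/-- **Weighted Hardy inequality under a Neumann condition at 0.**
If `z ∈ H²(0,1)` (i.e. `z`, `z'` absolutely continuous on `[0,1]` and `z''`
square-integrable, encoded via the fundamental theorem of calculus) with
`z 0 = z 1 = 0` and `z' 0 = 0`, then for every `α ∈ [-2,2)` the integral
`∫₀¹ x^α z'(x)² dx` is finite and
`((1-α)²/4) ∫₀¹ x^(α-2) z(x)² dx ≤ ∫₀¹ x^α z'(x)² dx`. -/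
theorem weighted_hardy_inequality_neumann
    (z z' z'' : ℝ → ℝ)
    (hz''int : IntervalIntegrable z'' volume 0 1)
    (hz''sq : IntervalIntegrable (fun x => z'' x ^ 2) volume 0 1)
    (hzFTC : ∀ x ∈ Set.Icc (0:ℝ) 1, z x = z 0 + ∫ t in (0:ℝ)..x, z' t)
    (hz'FTC : ∀ x ∈ Set.Icc (0:ℝ) 1, z' x = z' 0 + ∫ t in (0:ℝ)..x, z'' t)
    (hz0 : z 0 = 0) (hz1 : z 1 = 0) (hz'0 : z' 0 = 0) :
    ∀ α ∈ Set.Ico (-2:ℝ) 2,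
      (∫⁻ x in Set.Ioo (0:ℝ) 1, ENNReal.ofReal (x ^ α * z' x ^ 2)) < ⊤ ∧
      ENNReal.ofReal ((1 - α) ^ 2 / 4) *
          (∫⁻ x in Set.Ioo (0:ℝ) 1, ENNReal.ofReal (x ^ (α - 2) * z x ^ 2))
        ≤ ∫⁻ x in Set.Ioo (0:ℝ) 1, ENNReal.ofReal (x ^ α * z' x ^ 2) := by
  have h01 : (0:ℝ) ≤ 1 := by norm_num
  have hz''Ioc : IntegrableOn z'' (Ioc 0 1) :=
    (intervalIntegrable_iff_integrableOn_Ioc_of_le h01).1 hz''int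
  have hz''sqIoc : IntegrableOn (fun t => z'' t ^ 2) (Ioc 0 1) :=
    (intervalIntegrable_iff_integrableOn_Ioc_of_le h01).1 hz''sq
  have hz''Icc : IntegrableOn z'' (Icc 0 1) := by
    rwa [IntegrableOn, ← Measure.restrict_congr_set Ioc_ae_eq_Icc]
  have hz''sqIcc : IntegrableOn (fun t => z'' t ^ 2) (Icc 0 1) := by
    rwa [IntegrableOn, ← Measure.restrict_congr_set Ioc_ae_eq_Icc]
  have hz'rep : ∀ x ∈ Icc (0:ℝ) 1, z' x = z' 0 + ∫ t in Ioc 0 x, z'' t := fun x hx => by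
    rw [hz'FTC x hx, intervalIntegral.integral_of_le hx.1]
  have hz'c : ContinuousOn z' (Icc 0 1) :=
    ContinuousOn.congr
      (continuousOn_const.add (intervalIntegral.continuousOn_primitive hz''Icc)) hz'rep
  have hz'Ioc : IntegrableOn z' (Ioc 0 1) :=
    hz'c.integrableOn_Icc.mono_set Ioc_subset_Icc_self
  have hz'sqIoc : IntegrableOn (fun t => z' t ^ 2) (Ioc 0 1) :=
    (hz'c.pow 2).integrableOn_Icc.mono_set Ioc_subset_Icc_self
  have hzrep : ∀ x ∈ Icc (0:ℝ) 1, z x = z 0 + ∫ t in Ioc 0 x, z' t := fun x hx => by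
    rw [hzFTC x hx, intervalIntegral.integral_of_le hx.1]
  -- the modulus Q
  set Q : ℝ → ℝ := fun x => ∫ t in Ioc 0 x, z'' t ^ 2 with hQdef
  have hQnn : ∀ x, 0 ≤ Q x := fun x =>
    setIntegral_nonneg measurableSet_Ioc fun t _ => sq_nonneg _
  have hQmono : ∀ x y : ℝ, x ≤ y → y ≤ 1 → Q x ≤ Q y := by
    intro x y hxy hy1
    refine setIntegral_mono_set (hz''sqIoc.mono_set (Ioc_subset_Ioc_right hy1)) ?_
      ((Ioc_subset_Ioc_right hxy).eventuallyLE)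
    filter_upwards [ae_restrict_mem measurableSet_Ioc] with t _ using sq_nonneg _
  have hQ0 : Q 0 = 0 := by simp [hQdef]
  have hQcont : ContinuousOn Q (Icc 0 1) := intervalIntegral.continuousOn_primitive hz''sqIcc
  have hQtend : Tendsto Q (nhdsWithin 0 (Ioo 0 1)) (nhds 0) := by
    have h : Tendsto Q (nhdsWithin 0 (Ioo 0 1)) (nhds (Q 0)) :=
      (hQcont 0 ⟨le_rfl, h01⟩).mono Ioo_subset_Icc_self
    rwa [hQ0] at h
  have hz'bd : ∀ x : ℝ, 0 < x → x ≤ 1 → z' x ^ 2 ≤ x * Q x := by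
    intro x hx hx1
    have e : z' x = ∫ t in Ioc 0 x, z'' t := by
      rw [hz'rep x ⟨hx.le, hx1⟩, hz'0, zero_add]
    rw [e]; exact prim_sq_le hz''Ioc hz''sqIoc hx hx1
  have hSbd : ∀ x : ℝ, 0 < x → x ≤ 1 → (∫ t in Ioc 0 x, z' t ^ 2) ≤ Q x * (x ^ 2 / 2) := by
    intro x hx hx1
    have hgint : IntegrableOn (fun t : ℝ => t * Q x) (Ioc 0 x) :=
      (continuous_id.mul continuous_const).integrableOn_Ioc
    have h1 : (∫ t in Ioc 0 x, z' t ^ 2) ≤ ∫ t in Ioc 0 x, t * Q x := by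
      refine setIntegral_mono_on (hz'sqIoc.mono_set (Ioc_subset_Ioc_right hx1)) hgint
        measurableSet_Ioc fun t ht => ?_
      calc z' t ^ 2 ≤ t * Q t := hz'bd t ht.1 (ht.2.trans hx1)
        _ ≤ t * Q x := mul_le_mul_of_nonneg_left (hQmono t x ht.2 hx1) ht.1.le
    have h2 : ∫ t in Ioc 0 x, t * Q x = Q x * (x ^ 2 / 2) := by
      rw [integral_mul_const, ← intervalIntegral.integral_of_le hx.le,
        integral_id]
      ring
    linarith
  have hzbd : ∀ x : ℝ, 0 < x → x ≤ 1 → z x ^ 2 ≤ x ^ 3 * Q x / 2 := by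
    intro x hx hx1
    have e : z x = ∫ t in Ioc 0 x, z' t := by
      rw [hzrep x ⟨hx.le, hx1⟩, hz0, zero_add]
    have h1 : z x ^ 2 ≤ x * ∫ t in Ioc 0 x, z' t ^ 2 := by
      rw [e]; exact prim_sq_le hz'Ioc hz'sqIoc hx hx1
    have h2 := hSbd x hx hx1
    nlinarith [hQnn x, hx.le]
  intro α hα
  obtain ⟨hαm2, hαlt2⟩ := hα
  constructor
  · -- finiteness
    by_cases hαe : α = -2
    · subst hαe
      have d2 : Tendsto (fun ε : ℝ => ε ^ ((0:ℝ) - 1) * z' ε ^ 2)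
          (nhdsWithin 0 (Ioo 0 1)) (nhds 0) := by
        refine tendsto_of_tendsto_of_tendsto_of_le_of_le' tendsto_const_nhds hQtend ?_ ?_
        · filter_upwards [self_mem_nhdsWithin] with x hx
          exact mul_nonneg (Real.rpow_nonneg hx.1.le _) (sq_nonneg _)
        · filter_upwards [self_mem_nhdsWithin] with x hx
          have hb := hz'bd x hx.1 hx.2.le
          have e1 : x ^ ((0:ℝ) - 1) = x⁻¹ := by
            rw [show (0:ℝ) - 1 = -1 by norm_num, Real.rpow_neg_one]
          rw [e1]
          calc x⁻¹ * z' x ^ 2 ≤ x⁻¹ * (x * Q x) :=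
                mul_le_mul_of_nonneg_left hb (inv_nonneg.2 hx.1.le)
            _ = Q x := inv_mul_cancel_left₀ (ne_of_gt hx.1) (Q x)
      have hcore := core_hardy (show (0:ℝ) ≠ 1 by norm_num) (Or.inl (by norm_num))
        hz''Ioc hz''sqIoc hz'rep d2
      have hRfin : (∫⁻ x in Ioo (0:ℝ) 1, ENNReal.ofReal (x ^ (0:ℝ) * z'' x ^ 2)) < ⊤ := by
        have e1 : (∫⁻ x in Ioo (0:ℝ) 1, ENNReal.ofReal (x ^ (0:ℝ) * z'' x ^ 2))
            = ∫⁻ x in Ioo (0:ℝ) 1, ENNReal.ofReal (z'' x ^ 2) := by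
          simp [Real.rpow_zero]
        rw [e1]
        have hint : IntegrableOn (fun x => z'' x ^ 2) (Ioo 0 1) := by
          rwa [IntegrableOn, Measure.restrict_congr_set Ioo_ae_eq_Ioc]
        exact (hasFiniteIntegral_iff_ofReal
          (Filter.Eventually.of_forall fun x => sq_nonneg _)).1 hint.2
      rw [show ((0:ℝ) - 2) = (-2:ℝ) by norm_num] at hcore
      by_contra hcon
      rw [not_lt, top_le_iff] at hcon
      rw [hcon, ENNReal.mul_top
        ((ENNReal.ofReal_pos.2 (by norm_num)).ne')] at hcore
      exact hRfin.ne (top_le_iff.1 hcore)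
    · have hαgt : -2 < α := lt_of_le_of_ne hαm2 (Ne.symm hαe)
      have hb : ∀ᵐ x ∂(volume.restrict (Ioo (0:ℝ) 1)),
          ENNReal.ofReal (x ^ α * z' x ^ 2) ≤ ENNReal.ofReal (x ^ (α + 1) * Q 1) := by
        filter_upwards [ae_restrict_mem measurableSet_Ioo] with x hx
        refine ENNReal.ofReal_le_ofReal ?_
        have h1 : z' x ^ 2 ≤ x * Q 1 := (hz'bd x hx.1 hx.2.le).trans
          (mul_le_mul_of_nonneg_left (hQmono x 1 hx.2.le le_rfl) hx.1.le)
        calc x ^ α * z' x ^ 2 ≤ x ^ α * (x * Q 1) :=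
              mul_le_mul_of_nonneg_left h1 (Real.rpow_nonneg hx.1.le _)
          _ = x ^ (α + 1) * Q 1 := by
              rw [Real.rpow_add_one (ne_of_gt hx.1)]; ring
      have h2 : IntegrableOn (fun x : ℝ => x ^ (α + 1) * Q 1) (Ioo 0 1) := by
        have h3 := (intervalIntegrable_iff_integrableOn_Ioc_of_le h01).1
          (intervalIntegral.intervalIntegrable_rpow' (by linarith : (-1:ℝ) < α + 1))
        exact (h3.mono_set Ioo_subset_Ioc_self).mul_const (Q 1)
      calc (∫⁻ x in Ioo (0:ℝ) 1, ENNReal.ofReal (x ^ α * z' x ^ 2))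
          ≤ ∫⁻ x in Ioo (0:ℝ) 1, ENNReal.ofReal (x ^ (α + 1) * Q 1) := lintegral_mono_ae hb
        _ < ⊤ := by
            refine (hasFiniteIntegral_iff_ofReal ?_).1 h2.2
            filter_upwards [ae_restrict_mem measurableSet_Ioo] with x hx
            exact mul_nonneg (Real.rpow_nonneg hx.1.le _) (hQnn 1)
  · -- the inequality
    by_cases hα1 : α = 1
    · subst hα1
      simp
    · have d1 : Tendsto (fun ε : ℝ => ε ^ (α - 1) * z ε ^ 2)
          (nhdsWithin 0 (Ioo 0 1)) (nhds 0) := by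
        have hQ2 : Tendsto (fun x => Q x / 2) (nhdsWithin 0 (Ioo 0 1)) (nhds 0) := by
          have h5 := hQtend.div_const 2
          simpa using h5
        refine tendsto_of_tendsto_of_tendsto_of_le_of_le' tendsto_const_nhds hQ2 ?_ ?_
        · filter_upwards [self_mem_nhdsWithin] with x hx
          exact mul_nonneg (Real.rpow_nonneg hx.1.le _) (sq_nonneg _)
        · filter_upwards [self_mem_nhdsWithin] with x hx
          have hb := hzbd x hx.1 hx.2.le
          have h3 : x ^ (α - 1) * x ^ 3 = x ^ (α + 2) := by
            rw [show (x:ℝ) ^ (3:ℕ) = x ^ ((3:ℕ):ℝ) from (Real.rpow_natCast x 3).symm,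
              ← Real.rpow_add hx.1, show α - 1 + (3:ℕ) = α + 2 by push_cast; ring]
          have h4 : x ^ (α + 2) ≤ 1 := Real.rpow_le_one hx.1.le hx.2.le (by linarith)
          calc x ^ (α - 1) * z x ^ 2 ≤ x ^ (α - 1) * (x ^ 3 * Q x / 2) :=
                mul_le_mul_of_nonneg_left hb (Real.rpow_nonneg hx.1.le _)
            _ = x ^ (α + 2) * (Q x / 2) := by rw [← h3]; ring
            _ ≤ 1 * (Q x / 2) := mul_le_mul_of_nonneg_right h4
                (div_nonneg (hQnn x) (by norm_num))
            _ = Q x / 2 := one_mul _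
      exact core_hardy hα1 (Or.inr hz1) hz'Ioc hz'sqIoc hzrep d1
end

section
/- Let f : [0,1] → ℝ be of class H² (i.e. f and f' are absolutely continuous on [0,1] and f'' is square-integrable) with f(0) = 0 and f'(0) = 0. Then the function x ↦ f(x)/x² is square-integrable on (0,1). -/
open MeasureTheory

section QuotientSquareAux
open Set

noncomputable def v2 (g : ℝ → ℝ) (t : ℝ) : ENNReal := ENNReal.ofReal (Real.sqrt t * g t ^ 2)

noncomputable def HH (g : ℝ → ℝ) (x : ℝ) : ENNReal := ∫⁻ t in Set.Ioc 0 x, v2 g t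

-- weighted Cauchy-Schwarz: (∫₀ˣ |g|)² ≤ 2√x · ∫₀ˣ √t g(t)² dt
lemma cs_step (g : ℝ → ℝ) {x : ℝ} (hx0 : 0 < x) (hgx : IntervalIntegrable g volume 0 x) :
    ENNReal.ofReal (∫ t in (0:ℝ)..x, |g t|) * ENNReal.ofReal (∫ t in (0:ℝ)..x, |g t|)
      ≤ ENNReal.ofReal (2 * Real.sqrt x) * HH g x := by
  have hgx' : IntegrableOn g (Set.Ioc 0 x) volume := by
    rwa [intervalIntegrable_iff_integrableOn_Ioc_of_le hx0.le] at hgx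
  have hmeasg : AEMeasurable g (volume.restrict (Set.Ioc 0 x)) := hgx'.aemeasurable
  have habs' : IntegrableOn (fun t => |g t|) (Set.Ioc 0 x) volume := hgx'.abs
  have hCof : ENNReal.ofReal (∫ t in (0:ℝ)..x, |g t|)
      = ∫⁻ t in Set.Ioc 0 x, ENNReal.ofReal |g t| := by
    rw [intervalIntegral.integral_of_le hx0.le]
    exact ofReal_integral_eq_lintegral_ofReal habs' (ae_of_all _ fun t => abs_nonneg _)
  set u : ℝ → ENNReal := fun t => ENNReal.ofReal (t ^ (-(1:ℝ)/4)) with hu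
  set w : ℝ → ENNReal := fun t => ENNReal.ofReal (t ^ ((1:ℝ)/4) * |g t|) with hw
  -- a.e. splitting
  have hsplit : ∫⁻ t in Set.Ioc 0 x, ENNReal.ofReal |g t| = ∫⁻ t in Set.Ioc 0 x, (u * w) t := by
    refine lintegral_congr_ae ((ae_restrict_iff' measurableSet_Ioc).mpr (ae_of_all _ ?_))
    intro t ht
    have ht0 : (0:ℝ) < t := ht.1
    simp only [hu, hw, Pi.mul_apply]
    rw [← ENNReal.ofReal_mul (Real.rpow_nonneg ht0.le _), ← mul_assoc,
      ← Real.rpow_add ht0]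
    norm_num
  -- Hölder
  have hHolder : ∫⁻ t in Set.Ioc 0 x, (u * w) t
      ≤ (∫⁻ t in Set.Ioc 0 x, u t ^ (2:ℝ)) ^ (1/(2:ℝ))
        * (∫⁻ t in Set.Ioc 0 x, w t ^ (2:ℝ)) ^ (1/(2:ℝ)) := by
    refine ENNReal.lintegral_mul_le_Lp_mul_Lq _ Real.HolderConjugate.two_two ?_ ?_
    · exact (ENNReal.measurable_ofReal.comp (measurable_id.pow_const _)).aemeasurable
    · exact (ENNReal.measurable_ofReal.aemeasurable.comp_aemeasurable
        (((measurable_id.pow_const _).aemeasurable.mul (continuous_abs.measurable.comp_aemeasurable hmeasg))))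
  have hU : ∫⁻ t in Set.Ioc 0 x, u t ^ (2:ℝ) = ENNReal.ofReal (2 * Real.sqrt x) := by
    have h1 : ∫⁻ t in Set.Ioc 0 x, u t ^ (2:ℝ)
        = ∫⁻ t in Set.Ioc 0 x, ENNReal.ofReal (t ^ (-(1:ℝ)/2)) := by
      refine lintegral_congr_ae ((ae_restrict_iff' measurableSet_Ioc).mpr (ae_of_all _ ?_))
      intro t ht
      simp only [hu]
      rw [ENNReal.ofReal_rpow_of_nonneg (Real.rpow_nonneg ht.1.le _) (by norm_num : (0:ℝ) ≤ 2)]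
      congr 1
      rw [← Real.rpow_mul ht.1.le]
      norm_num
    rw [h1, ← ofReal_integral_eq_lintegral_ofReal]
    · congr 1
      rw [← intervalIntegral.integral_of_le hx0.le,
        integral_rpow (Or.inl (by norm_num : (-1:ℝ) < -(1:ℝ)/2))]
      rw [Real.zero_rpow (by norm_num), Real.sqrt_eq_rpow]
      norm_num
      ring
    · exact (intervalIntegral.intervalIntegrable_rpow' (by norm_num)).1
    · refine (ae_restrict_iff' measurableSet_Ioc).mpr (ae_of_all _ fun t ht => ?_)
      exact Real.rpow_nonneg ht.1.le _
  have hW : ∫⁻ t in Set.Ioc 0 x, w t ^ (2:ℝ) = HH g x := by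
    refine lintegral_congr_ae ((ae_restrict_iff' measurableSet_Ioc).mpr (ae_of_all _ ?_))
    intro t ht
    simp only [hw, v2]
    rw [ENNReal.ofReal_rpow_of_nonneg
      (mul_nonneg (Real.rpow_nonneg ht.1.le _) (abs_nonneg _)) (by norm_num : (0:ℝ) ≤ 2)]
    congr 1
    rw [Real.mul_rpow (Real.rpow_nonneg ht.1.le _) (abs_nonneg _),
      ← Real.rpow_mul ht.1.le, Real.rpow_two, sq_abs, Real.sqrt_eq_rpow]
    norm_num
  set A := ENNReal.ofReal (2 * Real.sqrt x)
  have hkey : ENNReal.ofReal (∫ t in (0:ℝ)..x, |g t|)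
      ≤ A ^ (1/(2:ℝ)) * HH g x ^ (1/(2:ℝ)) := by
    rw [hCof, hsplit]
    calc ∫⁻ t in Set.Ioc 0 x, (u * w) t
        ≤ (∫⁻ t in Set.Ioc 0 x, u t ^ (2:ℝ)) ^ (1/(2:ℝ))
          * (∫⁻ t in Set.Ioc 0 x, w t ^ (2:ℝ)) ^ (1/(2:ℝ)) := hHolder
      _ = A ^ (1/(2:ℝ)) * HH g x ^ (1/(2:ℝ)) := by rw [hU, hW]
  calc ENNReal.ofReal (∫ t in (0:ℝ)..x, |g t|) * ENNReal.ofReal (∫ t in (0:ℝ)..x, |g t|)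
      ≤ (A ^ (1/(2:ℝ)) * HH g x ^ (1/(2:ℝ))) * (A ^ (1/(2:ℝ)) * HH g x ^ (1/(2:ℝ))) :=
        mul_le_mul' hkey hkey
    _ = (A ^ (1/(2:ℝ)) * A ^ (1/(2:ℝ))) * (HH g x ^ (1/(2:ℝ)) * HH g x ^ (1/(2:ℝ))) := by ring
    _ = A * HH g x := by
        rw [← ENNReal.rpow_add_of_nonneg _ _ (by norm_num) (by norm_num),
          ← ENNReal.rpow_add_of_nonneg _ _ (by norm_num) (by norm_num)]
        norm_num


lemma majorant_lt_top (g : ℝ → ℝ) (hg : IntegrableOn (fun t => g t ^ 2) (Set.Ioc 0 1)) :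
    ∫⁻ x in Set.Ioc 0 1, ENNReal.ofReal (2 * x ^ (-(3:ℝ)/2)) * HH g x < ⊤ := by
  set ν := volume.restrict (Set.Ioc (0:ℝ) 1) with hν
  set F : ℝ → ℝ → ENNReal :=
    fun x t => ENNReal.ofReal (2 * x ^ (-(3:ℝ)/2)) * (Set.Ioc 0 x).indicator (v2 g) t with hF
  -- rewrite as double integral
  have hrw : ∀ x ∈ Set.Ioc (0:ℝ) 1,
      ENNReal.ofReal (2 * x ^ (-(3:ℝ)/2)) * HH g x = ∫⁻ t, F x t ∂ν := by
    intro x hx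
    rw [hν, hF]
    simp only
    rw [lintegral_const_mul' _ _ ENNReal.ofReal_ne_top, lintegral_indicator measurableSet_Ioc,
      Measure.restrict_restrict measurableSet_Ioc,
      Set.inter_eq_left.mpr (Set.Ioc_subset_Ioc le_rfl hx.2)]
    rfl
  have hswapmeas : AEMeasurable (Function.uncurry F) (ν.prod ν) := by
    have hS : MeasurableSet {p : ℝ × ℝ | p.2 ∈ Set.Ioc 0 p.1} := by
      refine MeasurableSet.inter ?_ ?_
      · exact measurableSet_lt measurable_const measurable_snd
      · exact measurableSet_le measurable_snd measurable_fst
    have hv2 : AEMeasurable (v2 g) ν := by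
      refine ENNReal.measurable_ofReal.comp_aemeasurable ?_
      exact (Real.continuous_sqrt.measurable.aemeasurable.mul hg.aemeasurable)
    have h1 : Measurable fun p : ℝ × ℝ => ENNReal.ofReal (2 * p.1 ^ (-(3:ℝ)/2)) :=
      ENNReal.measurable_ofReal.comp ((measurable_fst.pow_const _).const_mul 2)
    have heq : Function.uncurry F = fun p : ℝ × ℝ =>
        ENNReal.ofReal (2 * p.1 ^ (-(3:ℝ)/2)) *
          ({p : ℝ × ℝ | p.2 ∈ Set.Ioc 0 p.1}).indicator (fun p => v2 g p.2) p := by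
      funext p
      by_cases h : p.2 ∈ Set.Ioc 0 p.1 <;>
        simp [Function.uncurry, hF, Set.indicator_apply, h]
    rw [heq]
    exact h1.aemeasurable.mul (hv2.comp_snd.indicator hS)
  have hswap : ∫⁻ x in Set.Ioc 0 1, ENNReal.ofReal (2 * x ^ (-(3:ℝ)/2)) * HH g x
      = ∫⁻ t, ∫⁻ x, F x t ∂ν ∂ν := by
    rw [← lintegral_lintegral_swap hswapmeas]
    exact lintegral_congr_ae ((ae_restrict_iff' measurableSet_Ioc).mpr (ae_of_all _ hrw))
  rw [hswap]
  -- inner integral bound for fixed t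
  have hinner : ∀ t ∈ Set.Ioc (0:ℝ) 1, ∫⁻ x, F x t ∂ν ≤ ENNReal.ofReal (4 * g t ^ 2) := by
    intro t ht
    have hpt : ∀ x : ℝ, F x t
        = (Set.Ici t).indicator (fun x => ENNReal.ofReal (2 * x ^ (-(3:ℝ)/2))) x * v2 g t := by
      intro x
      by_cases h : t ≤ x
      · have : t ∈ Set.Ioc 0 x := ⟨ht.1, h⟩
        simp [hF, Set.indicator_of_mem, this, Set.mem_Ici.mpr h]
      · have h1 : t ∉ Set.Ioc 0 x := fun hc => h hc.2
        have h2 : x ∉ Set.Ici t := fun hc => h (Set.mem_Ici.mp hc)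
        simp only [hF, Set.indicator_of_notMem h1, Set.indicator_of_notMem h2,
          mul_zero, zero_mul]
    calc ∫⁻ x, F x t ∂ν
        = ∫⁻ x, (Set.Ici t).indicator (fun x => ENNReal.ofReal (2 * x ^ (-(3:ℝ)/2))) x
            * v2 g t ∂ν := by exact lintegral_congr fun x => hpt x
      _ = (∫⁻ x, (Set.Ici t).indicator (fun x => ENNReal.ofReal (2 * x ^ (-(3:ℝ)/2))) x ∂ν)
            * v2 g t := lintegral_mul_const' _ _ ENNReal.ofReal_ne_top
      _ = (∫⁻ x in Set.Icc t 1, ENNReal.ofReal (2 * x ^ (-(3:ℝ)/2))) * v2 g t := by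
          have hset : Set.Ici t ∩ Set.Ioc 0 1 = Set.Icc t 1 := by
            ext y
            simp only [Set.mem_inter_iff, Set.mem_Ici, Set.mem_Ioc, Set.mem_Icc]
            exact ⟨fun h => ⟨h.1, h.2.2⟩, fun h => ⟨h.1, ht.1.trans_le h.1, h.2⟩⟩
          rw [lintegral_indicator measurableSet_Ici, hν,
            Measure.restrict_restrict measurableSet_Ici, hset]
      _ ≤ ENNReal.ofReal (4 * t ^ (-(1:ℝ)/2)) * v2 g t := by
          refine mul_le_mul' ?_ le_rfl
          have hcont : ContinuousOn (fun x : ℝ => 2 * x ^ (-(3:ℝ)/2)) (Set.Icc t 1) := by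
            intro x hx
            exact (ContinuousAt.continuousWithinAt
              ((Real.continuousAt_rpow_const x _
                (Or.inl (ne_of_gt (lt_of_lt_of_le ht.1 hx.1)))).const_mul 2))
          have hint : IntegrableOn (fun x : ℝ => 2 * x ^ (-(3:ℝ)/2)) (Set.Icc t 1) :=
            hcont.integrableOn_Icc
          rw [← Measure.restrict_congr_set Ioc_ae_eq_Icc]
          rw [← ofReal_integral_eq_lintegral_ofReal (hint.mono_set Set.Ioc_subset_Icc_self)
            ((ae_restrict_iff' measurableSet_Ioc).mpr (ae_of_all _ fun x hx =>
              mul_nonneg (by norm_num) (Real.rpow_nonneg (ht.1.trans hx.1).le _)))]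
          refine ENNReal.ofReal_le_ofReal ?_
          rw [← intervalIntegral.integral_of_le ht.2, intervalIntegral.integral_const_mul,
            integral_rpow (Or.inr ⟨by norm_num, fun hc => by
              have := hc.1; rw [min_eq_left ht.2] at this; exact absurd this (not_le.mpr ht.1)⟩)]
          rw [Real.one_rpow]
          have h1 : (0:ℝ) < t ^ (-(1:ℝ)/2) := Real.rpow_pos_of_pos ht.1 _
          have : -(3:ℝ)/2 + 1 = -(1:ℝ)/2 := by norm_num
          rw [this]
          nlinarith
      _ = ENNReal.ofReal (4 * g t ^ 2) := by
          rw [v2, ← ENNReal.ofReal_mul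
            (mul_nonneg (by norm_num) (Real.rpow_nonneg ht.1.le _))]
          congr 1
          rw [Real.sqrt_eq_rpow, ← mul_assoc, mul_assoc (4:ℝ), ← Real.rpow_add ht.1]
          norm_num
  calc ∫⁻ t, ∫⁻ x, F x t ∂ν ∂ν
      ≤ ∫⁻ t, ENNReal.ofReal (4 * g t ^ 2) ∂ν := by
        refine lintegral_mono_ae ((ae_restrict_iff' measurableSet_Ioc).mpr (ae_of_all _ hinner))
    _ = ∫⁻ t, ENNReal.ofReal 4 * ENNReal.ofReal (g t ^ 2) ∂ν := by
        simp_rw [← ENNReal.ofReal_mul (by norm_num : (0:ℝ) ≤ 4)]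
    _ = ENNReal.ofReal 4 * ∫⁻ t, ENNReal.ofReal (g t ^ 2) ∂ν :=
        lintegral_const_mul' _ _ ENNReal.ofReal_ne_top
    _ < ⊤ := by
        refine ENNReal.mul_lt_top ENNReal.ofReal_lt_top ?_
        have h2 : ∫⁻ t, (‖g t ^ 2‖₊ : ENNReal) ∂ν < ⊤ := hg.2
        refine lt_of_le_of_lt (lintegral_mono fun t => ?_) h2
        exact Real.ofReal_le_enorm _


end QuotientSquareAux

/-- If `f ∈ H²(0,1)` (i.e. `f`, `f'` absolutely continuous on `[0,1]` and `f''`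
square-integrable, encoded via the fundamental theorem of calculus) with
`f 0 = 0` and `f' 0 = 0`, then `x ↦ f(x)/x²` is square-integrable on `(0,1)`. -/
theorem quotient_square_integrable
    (f f' f'' : ℝ → ℝ)
    (hf''int : IntervalIntegrable f'' volume 0 1)
    (hf''sq : IntervalIntegrable (fun x => f'' x ^ 2) volume 0 1)
    (hfFTC : ∀ x ∈ Set.Icc (0:ℝ) 1, f x = f 0 + ∫ t in (0:ℝ)..x, f' t)
    (hf'FTC : ∀ x ∈ Set.Icc (0:ℝ) 1, f' x = f' 0 + ∫ t in (0:ℝ)..x, f'' t)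
    (hf0 : f 0 = 0) (hf'0 : f' 0 = 0) :
    IntervalIntegrable (fun x => (f x / x ^ 2) ^ 2) volume 0 1 := by

  rw [intervalIntegrable_iff_integrableOn_Ioc_of_le zero_le_one]
  have hfx : ∀ x ∈ Set.Icc (0:ℝ) 1, f x = ∫ t in (0:ℝ)..x, f' t := fun x hx => by
    rw [hfFTC x hx, hf0, zero_add]
  have hf'x : ∀ x ∈ Set.Icc (0:ℝ) 1, f' x = ∫ t in (0:ℝ)..x, f'' t := fun x hx => by
    rw [hf'FTC x hx, hf'0, zero_add]
  have hF'cont : ContinuousOn (fun x => ∫ t in (0:ℝ)..x, f'' t) (Set.Icc 0 1) := by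
    have := intervalIntegral.continuousOn_primitive_interval' hf''int
      (a := 0) (by simp [Set.uIcc_of_le])
    rwa [Set.uIcc_of_le zero_le_one] at this
  have hf'cont : ContinuousOn f' (Set.Icc 0 1) := hF'cont.congr hf'x
  have hf'int : IntegrableOn f' (Set.Icc 0 1) := hf'cont.integrableOn_Icc
  have hFcont : ContinuousOn (fun x => ∫ t in (0:ℝ)..x, f' t) (Set.Icc 0 1) := by
    have := intervalIntegral.continuousOn_primitive_interval (a := 0) (b := 1)
      (by rwa [Set.uIcc_of_le zero_le_one] : IntegrableOn f' (Set.uIcc 0 1) volume)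
    rwa [Set.uIcc_of_le zero_le_one] at this
  have hsq : IntegrableOn (fun t => f'' t ^ 2) (Set.Ioc 0 1) := by
    rwa [intervalIntegrable_iff_integrableOn_Ioc_of_le zero_le_one] at hf''sq
  -- pointwise bound
  have hpt : ∀ x ∈ Set.Ioc (0:ℝ) 1, ENNReal.ofReal ((f x / x ^ 2) ^ 2)
      ≤ ENNReal.ofReal (2 * x ^ (-(3:ℝ)/2)) * HH f'' x := by
    intro x hx
    have hx0 : (0:ℝ) < x := hx.1
    have hxIcc : x ∈ Set.Icc (0:ℝ) 1 := ⟨hx0.le, hx.2⟩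
    set C := ∫ t in (0:ℝ)..x, |f'' t| with hC
    have hf''x : IntervalIntegrable f'' volume 0 x := by
      refine hf''int.mono_set ?_
      rw [Set.uIcc_of_le hx0.le, Set.uIcc_of_le zero_le_one]
      exact Set.Icc_subset_Icc le_rfl hx.2
    have hC0 : 0 ≤ C :=
      intervalIntegral.integral_nonneg hx0.le fun t _ => abs_nonneg _
    have hf'bd : ∀ t ∈ Set.Icc (0:ℝ) x, |f' t| ≤ C := by
      intro t ht
      rw [hf'x t ⟨ht.1, ht.2.trans hx.2⟩]
      calc |∫ s in (0:ℝ)..t, f'' s| ≤ ∫ s in (0:ℝ)..t, |f'' s| :=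
            intervalIntegral.abs_integral_le_integral_abs ht.1
        _ ≤ C := by
            refine intervalIntegral.integral_mono_interval le_rfl ht.1 ht.2 ?_ hf''x.abs
            exact (ae_restrict_iff' measurableSet_Ioc).mpr (ae_of_all _ fun s _ => abs_nonneg _)
    have hf'intx : IntervalIntegrable f' volume 0 x := by
      have : IntegrableOn f' (Set.uIcc 0 x) := by
        rw [Set.uIcc_of_le hx0.le]
        exact hf'int.mono_set (Set.Icc_subset_Icc le_rfl hx.2)
      exact this.intervalIntegrable
    have hfxbd : |f x| ≤ x * C := by
      rw [hfx x hxIcc]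
      calc |∫ t in (0:ℝ)..x, f' t| ≤ ∫ t in (0:ℝ)..x, |f' t| :=
            intervalIntegral.abs_integral_le_integral_abs hx0.le
        _ ≤ ∫ _t in (0:ℝ)..x, C :=
            intervalIntegral.integral_mono_on hx0.le hf'intx.abs intervalIntegrable_const hf'bd
        _ = x * C := by simp
    have hcs : ENNReal.ofReal C * ENNReal.ofReal C
        ≤ ENNReal.ofReal (2 * Real.sqrt x) * HH f'' x := cs_step f'' hx0 hf''x
    have hxne : (x:ℝ) ≠ 0 := ne_of_gt hx0
    have hreal : (f x / x ^ 2) ^ 2 ≤ C * C * (x ^ 2)⁻¹ := by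
      have h1 : f x ^ 2 ≤ (x * C) ^ 2 := by
        rw [← sq_abs (f x)]
        exact pow_le_pow_left₀ (abs_nonneg _) hfxbd 2
      have h2 : (f x / x ^ 2) ^ 2 = f x ^ 2 / (x ^ 2) ^ 2 := by rw [div_pow]
      rw [h2, div_le_iff₀ (by positivity)]
      calc f x ^ 2 ≤ (x * C) ^ 2 := h1
        _ = C * C * (x ^ 2)⁻¹ * (x ^ 2) ^ 2 := by field_simp
    calc ENNReal.ofReal ((f x / x ^ 2) ^ 2)
        ≤ ENNReal.ofReal (C * C * (x ^ 2)⁻¹) := ENNReal.ofReal_le_ofReal hreal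
      _ = ENNReal.ofReal C * ENNReal.ofReal C * ENNReal.ofReal ((x ^ 2)⁻¹) := by
          rw [ENNReal.ofReal_mul (mul_nonneg hC0 hC0), ENNReal.ofReal_mul hC0]
      _ ≤ ENNReal.ofReal (2 * Real.sqrt x) * HH f'' x * ENNReal.ofReal ((x ^ 2)⁻¹) :=
          mul_le_mul_left hcs _
      _ = ENNReal.ofReal (2 * Real.sqrt x) * ENNReal.ofReal ((x ^ 2)⁻¹) * HH f'' x := by
          ring
      _ = ENNReal.ofReal (2 * Real.sqrt x * (x ^ 2)⁻¹) * HH f'' x := by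
          rw [ENNReal.ofReal_mul (by positivity : (0:ℝ) ≤ 2 * Real.sqrt x)]
      _ = ENNReal.ofReal (2 * x ^ (-(3:ℝ)/2)) * HH f'' x := by
          congr 2
          rw [Real.sqrt_eq_rpow,
            show ((x:ℝ) ^ 2)⁻¹ = x ^ (-(2:ℝ)) by
              rw [← Real.rpow_two, ← Real.rpow_neg hx0.le],
            mul_assoc, ← Real.rpow_add hx0]
          norm_num
  constructor
  · -- a.e. strong measurability
    have hcont : ContinuousOn (fun x => ((∫ t in (0:ℝ)..x, f' t) / x ^ 2) ^ 2)
        (Set.Ioc 0 1) := by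
      refine ContinuousOn.pow ?_ 2
      refine ContinuousOn.div (hFcont.mono Set.Ioc_subset_Icc_self)
        (continuousOn_pow 2) ?_
      intro x hx
      exact pow_ne_zero 2 (ne_of_gt hx.1)
    refine (hcont.aestronglyMeasurable measurableSet_Ioc).congr ?_
    refine (ae_restrict_iff' measurableSet_Ioc).mpr (ae_of_all _ fun x hx => ?_)
    show ((∫ t in (0:ℝ)..x, f' t) / x ^ 2) ^ 2 = (f x / x ^ 2) ^ 2
    rw [hfx x ⟨hx.1.le, hx.2⟩]
  · -- finite integral
    rw [hasFiniteIntegral_iff_norm]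
    calc ∫⁻ x in Set.Ioc 0 1, ENNReal.ofReal ‖(f x / x ^ 2) ^ 2‖
        = ∫⁻ x in Set.Ioc 0 1, ENNReal.ofReal ((f x / x ^ 2) ^ 2) := by
          refine lintegral_congr fun x => ?_
          rw [Real.norm_eq_abs, abs_of_nonneg (sq_nonneg _)]
      _ ≤ ∫⁻ x in Set.Ioc 0 1, ENNReal.ofReal (2 * x ^ (-(3:ℝ)/2)) * HH f'' x :=
          lintegral_mono_ae ((ae_restrict_iff' measurableSet_Ioc).mpr (ae_of_all _ hpt))
      _ < ⊤ := majorant_lt_top f'' hsq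
end

section
/- Let ν ∈ (0,1), c_ν := ν² - 1/4, γ > 0 and n a positive integer. Let f = f_r + f_s and g = g_r + g_s belong to D(A), i.e. f_r, g_r are of class H² on [-1,1] with f_r(0)=f_r'(0)=g_r(0)=g_r'(0)=0, f_s and g_s are of the singular form with coefficient quadruples satisfying the transmission conditions, and f(±1) = g(±1) = 0. Set A_n h := -h_r'' + (c_ν/x²) h_r + (nπ)² |x|^(2γ) h for h ∈ D(A). Then ∫₋₁¹ (A_n f)(x) g(x) dx = ∫₋₁¹ f(x) (A_n g)(x) dx. -/
open MeasureTheory Real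

section AnSymmetricAux

noncomputable def sng2 (c₁ c₂ p q : ℝ) : ℝ → ℝ := fun y => c₁ * y ^ p + c₂ * y ^ q
noncomputable def Dfun (r s a₁ a₂ d₁ d₂ : ℝ) (u u'' w w'' : ℝ → ℝ) : ℝ → ℝ := fun x =>
  (u x * sng2 (d₁ * r * (r - 1)) (d₂ * s * (s - 1)) (r - 1 - 1) (s - 1 - 1) x
      - u'' x * sng2 d₁ d₂ r s x)
    + ((sng2 a₁ a₂ r s x * w'' x
        - sng2 (a₁ * r * (r - 1)) (a₂ * s * (s - 1)) (r - 1 - 1) (s - 1 - 1) x * w x)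
      + (u x * w'' x - u'' x * w x))
noncomputable def Bfun (r s a₁ a₂ d₁ d₂ : ℝ) (u u' w w' : ℝ → ℝ) : ℝ → ℝ := fun y =>
  (u y * w' y - u' y * w y)
    + ((u y * sng2 (d₁ * r) (d₂ * s) (r - 1) (s - 1) y - u' y * sng2 d₁ d₂ r s y)
      + (sng2 a₁ a₂ r s y * w' y - sng2 (a₁ * r) (a₂ * s) (r - 1) (s - 1) y * w y))

lemma swap_triangle (a b : ℝ) (φ w : ℝ → ℝ)
    (hφ : IntegrableOn φ (Set.Ioc a b)) (hw : IntegrableOn w (Set.Ioc a b)) :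
    ∫ x in Set.Ioc a b, φ x * (∫ t in Set.Ioc a x, w t)
      = ∫ t in Set.Ioc a b, (∫ x in Set.Ioc t b, φ x) * w t := by
  set μ := volume.restrict (Set.Ioc a b) with hμ
  have hmeas : MeasurableSet {q : ℝ × ℝ | q.2 ≤ q.1} :=
    measurableSet_le measurable_snd measurable_fst
  have hbase : Integrable (fun q : ℝ × ℝ => φ q.1 * w q.2) (μ.prod μ) :=
    Integrable.mul_prod hφ hw
  have hF : Integrable
      (Set.indicator {q : ℝ × ℝ | q.2 ≤ q.1} (fun q : ℝ × ℝ => φ q.1 * w q.2)) (μ.prod μ) :=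
    hbase.indicator hmeas
  have hswap := MeasureTheory.integral_integral_swap
    (f := fun x t => Set.indicator {q : ℝ × ℝ | q.2 ≤ q.1}
      (fun q : ℝ × ℝ => φ q.1 * w q.2) (x, t)) (μ := μ) (ν := μ) hF
  calc ∫ x in Set.Ioc a b, φ x * (∫ t in Set.Ioc a x, w t)
      = ∫ x, (∫ t, Set.indicator {q : ℝ × ℝ | q.2 ≤ q.1}
          (fun q : ℝ × ℝ => φ q.1 * w q.2) (x, t) ∂μ) ∂μ := by
        rw [hμ]
        refine (setIntegral_congr_fun measurableSet_Ioc fun x hx => ?_).symm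
        have h1 : (fun t => Set.indicator {q : ℝ × ℝ | q.2 ≤ q.1}
            (fun q : ℝ × ℝ => φ q.1 * w q.2) (x, t))
            = Set.indicator (Set.Iic x) (fun t => φ x * w t) := by
          funext t
          by_cases h : t ≤ x <;>
            simp [Set.indicator, Set.mem_setOf_eq, Set.mem_Iic, h]
        rw [h1, MeasureTheory.integral_indicator measurableSet_Iic,
          Measure.restrict_restrict measurableSet_Iic]
        have h2 : Set.Iic x ∩ Set.Ioc a b = Set.Ioc a x := by
          ext t
          simp only [Set.mem_inter_iff, Set.mem_Iic, Set.mem_Ioc]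
          constructor
          · rintro ⟨h1', h2', _⟩; exact ⟨h2', h1'⟩
          · rintro ⟨h1', h2'⟩; exact ⟨h2', h1', h2'.trans hx.2⟩
        rw [h2, MeasureTheory.integral_const_mul]
    _ = ∫ t, (∫ x, Set.indicator {q : ℝ × ℝ | q.2 ≤ q.1}
          (fun q : ℝ × ℝ => φ q.1 * w q.2) (x, t) ∂μ) ∂μ := hswap
    _ = ∫ t in Set.Ioc a b, (∫ x in Set.Ioc t b, φ x) * w t := by
        rw [hμ]
        refine setIntegral_congr_fun measurableSet_Ioc fun t ht => ?_
        have h1 : (fun x => Set.indicator {q : ℝ × ℝ | q.2 ≤ q.1}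
            (fun q : ℝ × ℝ => φ q.1 * w q.2) (x, t))
            = Set.indicator (Set.Ici t) (fun x => φ x * w t) := by
          funext x
          by_cases h : t ≤ x <;>
            simp [Set.indicator, Set.mem_setOf_eq, Set.mem_Ici, h]
        rw [h1, MeasureTheory.integral_indicator measurableSet_Ici,
          Measure.restrict_restrict measurableSet_Ici]
        have h2 : Set.Ici t ∩ Set.Ioc a b = Set.Icc t b := by
          ext x
          simp only [Set.mem_inter_iff, Set.mem_Ici, Set.mem_Ioc, Set.mem_Icc]
          constructor
          · rintro ⟨h1', _, h3'⟩; exact ⟨h1', h3'⟩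
          · rintro ⟨h1', h2'⟩; exact ⟨h1', lt_of_lt_of_le ht.1 h1', h2'⟩
        rw [h2, MeasureTheory.integral_Icc_eq_integral_Ioc,
          ← MeasureTheory.integral_mul_const]

/-- Integration by parts where both factors are primitives of integrable functions. -/
lemma ibp_primitive (a b : ℝ) (hab : a ≤ b) (φ w u v : ℝ → ℝ)
    (hφ : IntervalIntegrable φ volume a b) (hw : IntervalIntegrable w volume a b)
    (hu : ∀ x ∈ Set.Icc a b, u x = u a + ∫ t in a..x, w t)
    (hv : ∀ x ∈ Set.Icc a b, v x = v a + ∫ t in a..x, φ t) :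
    ∫ x in a..b, φ x * u x = v b * u b - v a * u a - ∫ x in a..b, v x * w x := by
  have hφ' : IntegrableOn φ (Set.Ioc a b) := by
    rwa [intervalIntegrable_iff, Set.uIoc_of_le hab] at hφ
  have hw' : IntegrableOn w (Set.Ioc a b) := by
    rwa [intervalIntegrable_iff, Set.uIoc_of_le hab] at hw
  have hucont : ContinuousOn u (Set.uIcc a b) := by
    apply ContinuousOn.congr (continuousOn_const.add
      (intervalIntegral.continuousOn_primitive_interval' hw Set.left_mem_uIcc))
    intro x hx; rw [Set.uIcc_of_le hab] at hx; exact hu x hx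
  have hvcont : ContinuousOn v (Set.uIcc a b) := by
    apply ContinuousOn.congr (continuousOn_const.add
      (intervalIntegral.continuousOn_primitive_interval' hφ Set.left_mem_uIcc))
    intro x hx; rw [Set.uIcc_of_le hab] at hx; exact hv x hx
  have hvw : IntervalIntegrable (fun x => v x * w x) volume a b :=
    hw.continuousOn_mul hvcont
  have hφub : IntegrableOn (fun x => φ x * (u x - u a)) (Set.Ioc a b) := by
    have h : IntervalIntegrable (fun x => φ x * (u x - u a)) volume a b :=
      hφ.mul_continuousOn (hucont.sub continuousOn_const)
    rwa [intervalIntegrable_iff, Set.uIoc_of_le hab] at h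
  have hmid : IntegrableOn (fun x => φ x * (∫ t in Set.Ioc a x, w t)) (Set.Ioc a b) := by
    refine hφub.congr_fun (fun x hx => ?_) measurableSet_Ioc
    beta_reduce
    rw [hu x ⟨le_of_lt hx.1, hx.2⟩, intervalIntegral.integral_of_le (le_of_lt hx.1)]
    ring
  have hvb : v b - v a = ∫ t in Set.Ioc a b, φ t := by
    rw [hv b ⟨hab, le_refl b⟩, intervalIntegral.integral_of_le hab]; ring
  have hub : u b - u a = ∫ t in Set.Ioc a b, w t := by
    rw [hu b ⟨hab, le_refl b⟩, intervalIntegral.integral_of_le hab]; ring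
  have key : ∫ x in Set.Ioc a b, φ x * u x
      = (∫ x in Set.Ioc a b, φ x * u a)
        + ∫ x in Set.Ioc a b, φ x * (∫ t in Set.Ioc a x, w t) := by
    rw [← MeasureTheory.integral_add (hφ'.mul_const _) hmid]
    refine setIntegral_congr_fun measurableSet_Ioc fun x hx => ?_
    have := hu x ⟨le_of_lt hx.1, hx.2⟩
    rw [this, intervalIntegral.integral_of_le (le_of_lt hx.1)]
    ring
  have key2 : ∫ t in Set.Ioc a b, (∫ x in Set.Ioc t b, φ x) * w t
      = ∫ t in Set.Ioc a b, (v b - v t) * w t := by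
    refine setIntegral_congr_fun measurableSet_Ioc fun t ht => ?_
    have h1 : ∫ x in Set.Ioc t b, φ x = ∫ x in t..b, φ x :=
      (intervalIntegral.integral_of_le ht.2).symm
    have hφt : IntervalIntegrable φ volume a t := by
      refine hφ.mono_set ?_
      rw [Set.uIcc_of_le (le_of_lt ht.1), Set.uIcc_of_le hab]
      exact Set.Icc_subset_Icc le_rfl ht.2
    have h2 : (∫ x in a..b, φ x) - ∫ x in a..t, φ x = ∫ x in t..b, φ x :=
      intervalIntegral.integral_interval_sub_left hφ hφt
    have h3 : v b - v t = ∫ x in t..b, φ x := by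
      rw [hv b ⟨hab, le_refl b⟩, hv t ⟨le_of_lt ht.1, ht.2⟩, ← h2]; ring
    rw [h1, h3]
  have key3 : ∫ t in Set.Ioc a b, (v b - v t) * w t
      = v b * (u b - u a) - ∫ t in Set.Ioc a b, v t * w t := by
    have : ∀ t, (v b - v t) * w t = v b * w t - v t * w t := fun t => by ring
    simp_rw [this]
    rw [MeasureTheory.integral_sub (hw'.const_mul _)
      (by rwa [intervalIntegrable_iff, Set.uIoc_of_le hab] at hvw),
      MeasureTheory.integral_const_mul, hub]
  rw [intervalIntegral.integral_of_le hab, intervalIntegral.integral_of_le hab, key,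
    swap_triangle a b φ w hφ' hw', key2, key3, MeasureTheory.integral_mul_const, ← hvb]
  ring

/-- Lagrange/Green identity on `[a,b]` for two `H²`-type functions given by FTC data. -/
lemma pair_ibp (a b : ℝ) (hab : a ≤ b) (u u' u'' v v' v'' : ℝ → ℝ)
    (hu'' : IntervalIntegrable u'' volume a b) (hv'' : IntervalIntegrable v'' volume a b)
    (hu : ∀ x ∈ Set.Icc a b, u x = u a + ∫ t in a..x, u' t)
    (hu' : ∀ x ∈ Set.Icc a b, u' x = u' a + ∫ t in a..x, u'' t)
    (hv : ∀ x ∈ Set.Icc a b, v x = v a + ∫ t in a..x, v' t)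
    (hv' : ∀ x ∈ Set.Icc a b, v' x = v' a + ∫ t in a..x, v'' t) :
    ∫ x in a..b, (u x * v'' x - u'' x * v x)
      = (u b * v' b - u' b * v b) - (u a * v' a - u' a * v a) := by
  have hu'cont : ContinuousOn u' (Set.uIcc a b) := by
    apply ContinuousOn.congr (continuousOn_const.add
      (intervalIntegral.continuousOn_primitive_interval' hu'' Set.left_mem_uIcc))
    intro x hx; rw [Set.uIcc_of_le hab] at hx; exact hu' x hx
  have hv'cont : ContinuousOn v' (Set.uIcc a b) := by
    apply ContinuousOn.congr (continuousOn_const.add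
      (intervalIntegral.continuousOn_primitive_interval' hv'' Set.left_mem_uIcc))
    intro x hx; rw [Set.uIcc_of_le hab] at hx; exact hv' x hx
  have hu'int : IntervalIntegrable u' volume a b := hu'cont.intervalIntegrable
  have hv'int : IntervalIntegrable v' volume a b := hv'cont.intervalIntegrable
  have hucont : ContinuousOn u (Set.uIcc a b) := by
    apply ContinuousOn.congr (continuousOn_const.add
      (intervalIntegral.continuousOn_primitive_interval' hu'int Set.left_mem_uIcc))
    intro x hx; rw [Set.uIcc_of_le hab] at hx; exact hu x hx
  have hvcont : ContinuousOn v (Set.uIcc a b) := by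
    apply ContinuousOn.congr (continuousOn_const.add
      (intervalIntegral.continuousOn_primitive_interval' hv'int Set.left_mem_uIcc))
    intro x hx; rw [Set.uIcc_of_le hab] at hx; exact hv x hx
  have I1 : ∫ x in a..b, v'' x * u x
      = v' b * u b - v' a * u a - ∫ x in a..b, v' x * u' x :=
    ibp_primitive a b hab v'' u' u v' hv'' hu'int hu hv'
  have I2 : ∫ x in a..b, u'' x * v x
      = u' b * v b - u' a * v a - ∫ x in a..b, u' x * v' x :=
    ibp_primitive a b hab u'' v' v u' hu'' hv'int hv hu'
  have hi1 : IntervalIntegrable (fun x => u x * v'' x) volume a b :=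
    hv''.continuousOn_mul hucont
  have hi2 : IntervalIntegrable (fun x => u'' x * v x) volume a b :=
    hu''.mul_continuousOn hvcont
  rw [intervalIntegral.integral_sub hi1 hi2]
  have e1 : ∫ x in a..b, u x * v'' x = ∫ x in a..b, v'' x * u x := by
    simp_rw [mul_comm]
  have e2 : ∫ x in a..b, v' x * u' x = ∫ x in a..b, u' x * v' x := by
    simp_rw [mul_comm]
  rw [e1, I1, e2, I2]
  ring

/-- Cauchy–Schwarz-type bound for the primitive of an `L²` function. -/
lemma prim_bound_half (u'' u' : ℝ → ℝ)
    (hint : IntervalIntegrable u'' volume 0 1)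
    (hsq : IntervalIntegrable (fun x => u'' x ^ 2) volume 0 1)
    (h : ∀ x ∈ Set.Icc (0:ℝ) 1, u' x = ∫ t in (0:ℝ)..x, u'' t) :
    ∃ M : ℝ, 1 ≤ M ∧ ∀ x ∈ Set.Ioc (0:ℝ) 1, |u' x| ≤ M * x ^ (1/2 : ℝ) := by
  set S : ℝ := ∫ t in (0:ℝ)..1, u'' t ^ 2 with hS
  have hS0 : 0 ≤ S := intervalIntegral.integral_nonneg zero_le_one (fun t _ => sq_nonneg _)
  refine ⟨S + 1, by linarith, fun x hx => ?_⟩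
  have hx0 : 0 < x := hx.1
  have hx1 : x ≤ 1 := hx.2
  set M : ℝ := S + 1 with hM
  have hM1 : 1 ≤ M := by linarith
  set l : ℝ := x ^ (1/2:ℝ) / M with hl
  have hsx : (0:ℝ) < x ^ (1/2:ℝ) := Real.rpow_pos_of_pos hx0 _
  have hl0 : 0 < l := by positivity
  have hintx : IntervalIntegrable u'' volume 0 x := by
    refine hint.mono_set ?_
    rw [Set.uIcc_of_le hx0.le, Set.uIcc_of_le zero_le_one]
    exact Set.Icc_subset_Icc le_rfl hx1
  have hsqx : IntervalIntegrable (fun t => u'' t ^ 2) volume 0 x := by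
    refine hsq.mono_set ?_
    rw [Set.uIcc_of_le hx0.le, Set.uIcc_of_le zero_le_one]
    exact Set.Icc_subset_Icc le_rfl hx1
  have h1 : |u' x| ≤ ∫ t in (0:ℝ)..x, |u'' t| := by
    rw [h x ⟨hx0.le, hx1⟩]
    exact intervalIntegral.abs_integral_le_integral_abs hx0.le
  have h2 : ∫ t in (0:ℝ)..x, |u'' t| ≤ ∫ t in (0:ℝ)..x, (l * u'' t ^ 2 + 1/l) / 2 := by
    refine intervalIntegral.integral_mono_on hx0.le hintx.abs ?_ (fun t _ => ?_)
    · exact (((hsqx.const_mul l).add (intervalIntegrable_const)).div_const 2)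
    · have habs : |u'' t| ^ 2 = u'' t ^ 2 := sq_abs _
      have hll : l * (1/l) = 1 := by field_simp
      nlinarith [sq_nonneg (l * |u'' t| - 1), hl0, abs_nonneg (u'' t),
        mul_pos hl0 hl0]
  have h3 : ∫ t in (0:ℝ)..x, (l * u'' t ^ 2 + 1/l) / 2
      = (l * ∫ t in (0:ℝ)..x, u'' t ^ 2) / 2 + (x / l) / 2 := by
    rw [intervalIntegral.integral_div, intervalIntegral.integral_add (hsqx.const_mul l)
      intervalIntegrable_const, intervalIntegral.integral_const_mul,
      intervalIntegral.integral_const]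
    simp [smul_eq_mul]
    ring
  have h4 : ∫ t in (0:ℝ)..x, u'' t ^ 2 ≤ S := by
    refine intervalIntegral.integral_mono_interval le_rfl hx0.le hx1 ?_ hsq
    filter_upwards with t using sq_nonneg _
  have hxl : x / l = M * x ^ (1/2:ℝ) := by
    rw [hl, div_div_eq_mul_div, div_eq_iff (ne_of_gt hsx)]
    rw [mul_assoc, ← Real.rpow_add hx0]
    norm_num
    ring
  calc |u' x| ≤ (l * ∫ t in (0:ℝ)..x, u'' t ^ 2) / 2 + (x / l) / 2 := by
        rw [← h3]; exact h1.trans h2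
    _ ≤ (l * S) / 2 + (M * x ^ (1/2:ℝ)) / 2 := by
        rw [hxl]
        have : l * (∫ t in (0:ℝ)..x, u'' t ^ 2) ≤ l * S :=
          mul_le_mul_of_nonneg_left h4 hl0.le
        linarith
    _ ≤ M * x ^ (1/2:ℝ) := by
        rw [hl]
        have hx12 : x ^ (1/2:ℝ) ≤ 1 :=
          Real.rpow_le_one hx0.le hx1 (by norm_num)
        have hSM : S ≤ M := by rw [hM]; linarith
        have e1 : x ^ (1/2:ℝ) / M * S ≤ x ^ (1/2:ℝ) * M := by
          rw [div_mul_eq_mul_div, div_le_iff₀ (by linarith : (0:ℝ) < M)]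
          have h5 : S ≤ M * M := by nlinarith
          nlinarith [mul_le_mul_of_nonneg_left h5 hsx.le]
        nlinarith

/-- bound `|u| ≤ M x^{3/2}` for the primitive of a function bounded by `M x^{1/2}`. -/
lemma prim_bound_32 (u' u : ℝ → ℝ) (M : ℝ) (hM : 1 ≤ M)
    (hu'cont : ContinuousOn u' (Set.Icc (0:ℝ) 1))
    (hb : ∀ x ∈ Set.Ioc (0:ℝ) 1, |u' x| ≤ M * x ^ (1/2:ℝ))
    (h0 : u' 0 = 0)
    (h : ∀ x ∈ Set.Icc (0:ℝ) 1, u x = ∫ t in (0:ℝ)..x, u' t) :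
    ∀ x ∈ Set.Ioc (0:ℝ) 1, |u x| ≤ M * x ^ (3/2:ℝ) := by
  intro x hx
  have hx0 : 0 < x := hx.1
  have hu'int : IntervalIntegrable u' volume 0 x :=
    (hu'cont.mono (Set.Icc_subset_Icc le_rfl hx.2)).intervalIntegrable_of_Icc hx0.le
  have h1 : |u x| ≤ ∫ t in (0:ℝ)..x, |u' t| := by
    rw [h x ⟨hx0.le, hx.2⟩]
    exact intervalIntegral.abs_integral_le_integral_abs hx0.le
  have h2 : ∫ t in (0:ℝ)..x, |u' t| ≤ ∫ t in (0:ℝ)..x, M * t ^ (1/2:ℝ) := by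
    refine intervalIntegral.integral_mono_on hx0.le hu'int.abs
      ((intervalIntegral.intervalIntegrable_rpow' (by norm_num)).const_mul M) (fun t ht => ?_)
    rcases eq_or_lt_of_le ht.1 with h' | h'
    · rw [← h', h0]
      simp [Real.zero_rpow (by norm_num : (1/2:ℝ) ≠ 0)]
    · exact hb t ⟨h', ht.2.trans hx.2⟩
  have h3 : ∫ t in (0:ℝ)..x, M * t ^ (1/2:ℝ) = M * (x ^ (3/2:ℝ) / (3/2)) := by
    rw [intervalIntegral.integral_const_mul, integral_rpow (Or.inl (by norm_num))]
    norm_num [Real.zero_rpow]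
  have hx32 : 0 ≤ x ^ (3/2:ℝ) := Real.rpow_nonneg hx0.le _
  calc |u x| ≤ M * (x ^ (3/2:ℝ) / (3/2)) := by rw [← h3]; exact h1.trans h2
    _ ≤ M * x ^ (3/2:ℝ) := by nlinarith

lemma sng_bound (c₁ c₂ p q : ℝ) (hqp : q ≤ p) :
    ∀ x ∈ Set.Ioc (0:ℝ) 1, |c₁ * x ^ p + c₂ * x ^ q| ≤ (|c₁| + |c₂|) * x ^ q := by
  intro x hx
  have h1 : x ^ p ≤ x ^ q := Real.rpow_le_rpow_of_exponent_ge hx.1 hx.2 hqp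
  have h2 : 0 < x ^ p := Real.rpow_pos_of_pos hx.1 _
  have h3 : 0 < x ^ q := Real.rpow_pos_of_pos hx.1 _
  calc |c₁ * x ^ p + c₂ * x ^ q| ≤ |c₁| * x ^ p + |c₂| * x ^ q := by
        refine (abs_add_le _ _).trans ?_
        rw [abs_mul, abs_mul, abs_of_pos h2, abs_of_pos h3]
    _ ≤ (|c₁| + |c₂|) * x ^ q := by nlinarith [abs_nonneg c₁, abs_nonneg c₂]

lemma sng_hasDerivAt (c₁ c₂ p q x : ℝ) (hx : 0 < x) :
    HasDerivAt (fun y => c₁ * y ^ p + c₂ * y ^ q)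
      (c₁ * p * x ^ (p - 1) + c₂ * q * x ^ (q - 1)) x := by
  have h1 := (Real.hasDerivAt_rpow_const (p := p) (Or.inl hx.ne')).const_mul c₁
  have h2 := (Real.hasDerivAt_rpow_const (p := q) (Or.inl hx.ne')).const_mul c₂
  exact (h1.add h2).congr_deriv (by ring)

lemma sng_contOn (c₁ c₂ p q : ℝ) {s : Set ℝ} (hs : ∀ x ∈ s, x ≠ 0) :
    ContinuousOn (fun y : ℝ => c₁ * y ^ p + c₂ * y ^ q) s :=
  ((continuousOn_id.rpow_const fun x hx => Or.inl (hs x hx)).const_smul c₁).add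
    ((continuousOn_id.rpow_const fun x hx => Or.inl (hs x hx)).const_smul c₂)

/-- integrability on `(0,1]` from a power bound. -/
lemma integrableOn_of_bound_rpow (h : ℝ → ℝ) (C p : ℝ) (hp : -1 < p)
    (hm : AEStronglyMeasurable h (volume.restrict (Set.Ioc (0:ℝ) 1)))
    (hb : ∀ x ∈ Set.Ioc (0:ℝ) 1, |h x| ≤ C * x ^ p) :
    IntervalIntegrable h volume 0 1 := by
  rw [intervalIntegrable_iff, Set.uIoc_of_le zero_le_one]
  have hg : IntegrableOn (fun x => C * x ^ p) (Set.Ioc (0:ℝ) 1) := by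
    have := (intervalIntegral.intervalIntegrable_rpow' (a := 0) (b := 1) hp).const_mul C
    rwa [intervalIntegrable_iff, Set.uIoc_of_le zero_le_one] at this
  refine hg.mono' hm ?_
  rw [ae_restrict_iff' measurableSet_Ioc]
  filter_upwards with x hx
  rw [Real.norm_eq_abs]
  exact hb x hx

/-- integrability of the product of an `L²` function and a power-bounded function. -/
lemma integrableOn_sq_mul (φ k : ℝ → ℝ)
    (hφsq : IntervalIntegrable (fun x => φ x ^ 2) volume 0 1)
    (hφm : AEStronglyMeasurable φ (volume.restrict (Set.Ioc (0:ℝ) 1)))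
    (hkm : AEStronglyMeasurable k (volume.restrict (Set.Ioc (0:ℝ) 1)))
    (C p : ℝ) (hp : -(1/2:ℝ) < p)
    (hb : ∀ x ∈ Set.Ioc (0:ℝ) 1, |k x| ≤ C * x ^ p) :
    IntervalIntegrable (fun x => φ x * k x) volume 0 1 := by
  rw [intervalIntegrable_iff, Set.uIoc_of_le zero_le_one]
  have hφsq' : IntegrableOn (fun x => φ x ^ 2) (Set.Ioc (0:ℝ) 1) := by
    rwa [intervalIntegrable_iff, Set.uIoc_of_le zero_le_one] at hφsq
  have hpow : IntegrableOn (fun x => C ^ 2 * x ^ (2 * p)) (Set.Ioc (0:ℝ) 1) := by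
    have := (intervalIntegral.intervalIntegrable_rpow' (a := 0) (b := 1)
      (by linarith : (-1:ℝ) < 2 * p)).const_mul (C ^ 2)
    rwa [intervalIntegrable_iff, Set.uIoc_of_le zero_le_one] at this
  have hg : IntegrableOn (fun x => (φ x ^ 2 + C ^ 2 * x ^ (2 * p)) / 2)
      (Set.Ioc (0:ℝ) 1) := (hφsq'.add hpow).div_const 2
  refine hg.mono' (hφm.mul hkm) ?_
  rw [ae_restrict_iff' measurableSet_Ioc]
  filter_upwards with x hx
  have hx0 : 0 < x := hx.1
  have h1 : |φ x * k x| ≤ |φ x| * (C * x ^ p) := by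
    rw [abs_mul]
    exact mul_le_mul_of_nonneg_left (hb x hx) (abs_nonneg _)
  have h2 : (C * x ^ p) ^ 2 = C ^ 2 * x ^ (2 * p) := by
    rw [mul_pow, ← Real.rpow_natCast (x ^ p) 2, ← Real.rpow_mul hx0.le]
    norm_num [mul_comm]
  rw [Real.norm_eq_abs]
  nlinarith [sq_nonneg (|φ x| - C * x ^ p), sq_abs (φ x), abs_nonneg (φ x * k x)]

lemma sng2_contOn (c₁ c₂ p q : ℝ) {s : Set ℝ} (hs : ∀ x ∈ s, x ≠ 0) :
    ContinuousOn (sng2 c₁ c₂ p q) s := sng_contOn c₁ c₂ p q hs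

/-- FTC representation of `sng2` on intervals avoiding `0`. -/
lemma sng2_rep (c₁ c₂ p q ε : ℝ) (hε : 0 < ε) :
    ∀ x ∈ Set.Icc ε 1, sng2 c₁ c₂ p q x
      = sng2 c₁ c₂ p q ε + ∫ t in ε..x, sng2 (c₁ * p) (c₂ * q) (p - 1) (q - 1) t := by
  intro x hx
  have hd : ∀ y ∈ Set.uIcc ε x, HasDerivAt (fun y : ℝ => c₁ * y ^ p + c₂ * y ^ q)
      (sng2 (c₁ * p) (c₂ * q) (p - 1) (q - 1) y) y := by
    intro y hy
    rw [Set.uIcc_of_le hx.1] at hy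
    exact sng_hasDerivAt c₁ c₂ p q y (lt_of_lt_of_le hε hy.1)
  have hi : IntervalIntegrable (sng2 (c₁ * p) (c₂ * q) (p - 1) (q - 1)) volume ε x := by
    refine (sng2_contOn (c₁ * p) (c₂ * q) (p - 1) (q - 1) ?_).intervalIntegrable
    intro y hy; rw [Set.uIcc_of_le hx.1] at hy; exact ne_of_gt (lt_of_lt_of_le hε hy.1)
  have h := intervalIntegral.integral_eq_sub_of_hasDerivAt hd hi
  rw [h]
  show sng2 c₁ c₂ p q x = sng2 c₁ c₂ p q ε + ((fun y : ℝ => c₁ * y ^ p + c₂ * y ^ q) x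
    - (fun y : ℝ => c₁ * y ^ p + c₂ * y ^ q) ε)
  simp [sng2]

/-- shifting the base point of an FTC representation. -/
lemma ftc_shift (g g' : ℝ → ℝ) (hint : IntervalIntegrable g' volume 0 1)
    (hrep : ∀ x ∈ Set.Icc (0:ℝ) 1, g x = ∫ t in (0:ℝ)..x, g' t) (ε : ℝ)
    (hε : ε ∈ Set.Ioc (0:ℝ) 1) :
    ∀ x ∈ Set.Icc ε 1, g x = g ε + ∫ t in ε..x, g' t := by
  intro x hx
  have hεx : ε ≤ x := hx.1
  have hsub : ∀ y : ℝ, y ∈ Set.Icc (0:ℝ) 1 → IntervalIntegrable g' volume 0 y := by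
    intro y hy
    refine hint.mono_set ?_
    rw [Set.uIcc_of_le hy.1, Set.uIcc_of_le zero_le_one]
    exact Set.Icc_subset_Icc le_rfl hy.2
  have hxI : x ∈ Set.Icc (0:ℝ) 1 := ⟨le_trans hε.1.le hεx, hx.2⟩
  have hεI : ε ∈ Set.Icc (0:ℝ) 1 := ⟨hε.1.le, hε.2⟩
  have h := intervalIntegral.integral_interval_sub_left (hsub x hxI) (hsub ε hεI)
  rw [hrep x hxI, hrep ε hεI, ← h]
  ring

/-- Green's identity on `[ε,1]`. -/
lemma pos_eps (r s ε : ℝ) (hε : ε ∈ Set.Ioc (0:ℝ) 1)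
    (u u' u'' w w' w'' : ℝ → ℝ) (a₁ a₂ d₁ d₂ : ℝ)
    (hu''int : IntervalIntegrable u'' volume 0 1)
    (hw''int : IntervalIntegrable w'' volume 0 1)
    (hu'int : IntervalIntegrable u' volume 0 1)
    (hw'int : IntervalIntegrable w' volume 0 1)
    (huFTC : ∀ x ∈ Set.Icc (0:ℝ) 1, u x = ∫ t in (0:ℝ)..x, u' t)
    (hu'FTC : ∀ x ∈ Set.Icc (0:ℝ) 1, u' x = ∫ t in (0:ℝ)..x, u'' t)
    (hwFTC : ∀ x ∈ Set.Icc (0:ℝ) 1, w x = ∫ t in (0:ℝ)..x, w' t)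
    (hw'FTC : ∀ x ∈ Set.Icc (0:ℝ) 1, w' x = ∫ t in (0:ℝ)..x, w'' t) :
    ∫ x in ε..1, Dfun r s a₁ a₂ d₁ d₂ u u'' w w'' x
      = Bfun r s a₁ a₂ d₁ d₂ u u' w w' 1 - Bfun r s a₁ a₂ d₁ d₂ u u' w w' ε := by
  have hε1 : ε ≤ 1 := hε.2
  have hmono : Set.uIcc ε 1 ⊆ Set.uIcc (0:ℝ) 1 := by
    rw [Set.uIcc_of_le hε1, Set.uIcc_of_le zero_le_one]
    exact Set.Icc_subset_Icc hε.1.le le_rfl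
  have hne : ∀ y ∈ Set.uIcc ε 1, y ≠ (0:ℝ) := by
    intro y hy; rw [Set.uIcc_of_le hε1] at hy; exact ne_of_gt (lt_of_lt_of_le hε.1 hy.1)
  -- the three pair identities
  have e1 : ∫ x in ε..1, (u x * w'' x - u'' x * w x)
      = (u 1 * w' 1 - u' 1 * w 1) - (u ε * w' ε - u' ε * w ε) :=
    pair_ibp ε 1 hε1 u u' u'' w w' w'' (hu''int.mono_set hmono) (hw''int.mono_set hmono)
      (ftc_shift u u' hu'int huFTC ε hε) (ftc_shift u' u'' hu''int hu'FTC ε hε)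
      (ftc_shift w w' hw'int hwFTC ε hε) (ftc_shift w' w'' hw''int hw'FTC ε hε)
  have e2 : ∫ x in ε..1,
        (u x * sng2 (d₁ * r * (r - 1)) (d₂ * s * (s - 1)) (r - 1 - 1) (s - 1 - 1) x
          - u'' x * sng2 d₁ d₂ r s x)
      = (u 1 * sng2 (d₁ * r) (d₂ * s) (r - 1) (s - 1) 1 - u' 1 * sng2 d₁ d₂ r s 1)
        - (u ε * sng2 (d₁ * r) (d₂ * s) (r - 1) (s - 1) ε - u' ε * sng2 d₁ d₂ r s ε) := by
    refine pair_ibp ε 1 hε1 u u' u'' (sng2 d₁ d₂ r s)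
      (sng2 (d₁ * r) (d₂ * s) (r - 1) (s - 1))
      (sng2 (d₁ * r * (r - 1)) (d₂ * s * (s - 1)) (r - 1 - 1) (s - 1 - 1))
      (hu''int.mono_set hmono) ((sng2_contOn _ _ _ _ hne).intervalIntegrable)
      (ftc_shift u u' hu'int huFTC ε hε) (ftc_shift u' u'' hu''int hu'FTC ε hε)
      (fun x hx => ?_) (fun x hx => ?_)
    · exact sng2_rep d₁ d₂ r s ε hε.1 x hx
    · have h := sng2_rep (d₁ * r) (d₂ * s) (r - 1) (s - 1) ε hε.1 x hx
      rwa [show d₁ * r * (r - 1) = d₁ * r * (r - 1) from rfl] at h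
  have e3 : ∫ x in ε..1,
        (sng2 a₁ a₂ r s x * w'' x
          - sng2 (a₁ * r * (r - 1)) (a₂ * s * (s - 1)) (r - 1 - 1) (s - 1 - 1) x * w x)
      = (sng2 a₁ a₂ r s 1 * w' 1 - sng2 (a₁ * r) (a₂ * s) (r - 1) (s - 1) 1 * w 1)
        - (sng2 a₁ a₂ r s ε * w' ε - sng2 (a₁ * r) (a₂ * s) (r - 1) (s - 1) ε * w ε) := by
    refine pair_ibp ε 1 hε1 (sng2 a₁ a₂ r s) (sng2 (a₁ * r) (a₂ * s) (r - 1) (s - 1))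
      (sng2 (a₁ * r * (r - 1)) (a₂ * s * (s - 1)) (r - 1 - 1) (s - 1 - 1))
      w w' w'' ((sng2_contOn _ _ _ _ hne).intervalIntegrable) (hw''int.mono_set hmono)
      (fun x hx => sng2_rep a₁ a₂ r s ε hε.1 x hx)
      (fun x hx => sng2_rep (a₁ * r) (a₂ * s) (r - 1) (s - 1) ε hε.1 x hx)
      (ftc_shift w w' hw'int hwFTC ε hε) (ftc_shift w' w'' hw''int hw'FTC ε hε)
  -- integrability of each summand on [ε,1]
  have hcu : ContinuousOn u (Set.uIcc ε 1) := by
    have h := intervalIntegral.continuousOn_primitive_interval'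
      (a := 0) (b₁ := 0) (b₂ := 1) hu'int (by simp)
    rw [Set.uIcc_of_le zero_le_one] at h
    refine (h.congr huFTC).mono ?_
    rw [Set.uIcc_of_le hε1]; exact Set.Icc_subset_Icc hε.1.le le_rfl
  have hcw : ContinuousOn w (Set.uIcc ε 1) := by
    have h := intervalIntegral.continuousOn_primitive_interval'
      (a := 0) (b₁ := 0) (b₂ := 1) hw'int (by simp)
    rw [Set.uIcc_of_le zero_le_one] at h
    refine (h.congr hwFTC).mono ?_
    rw [Set.uIcc_of_le hε1]; exact Set.Icc_subset_Icc hε.1.le le_rfl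
  have j1 : IntervalIntegrable (fun x =>
      u x * sng2 (d₁ * r * (r - 1)) (d₂ * s * (s - 1)) (r - 1 - 1) (s - 1 - 1) x
        - u'' x * sng2 d₁ d₂ r s x) volume ε 1 :=
    (((sng2_contOn _ _ _ _ hne).intervalIntegrable).continuousOn_mul hcu).sub
      ((hu''int.mono_set hmono).mul_continuousOn (sng2_contOn _ _ _ _ hne))
  have j2 : IntervalIntegrable (fun x =>
      sng2 a₁ a₂ r s x * w'' x
        - sng2 (a₁ * r * (r - 1)) (a₂ * s * (s - 1)) (r - 1 - 1) (s - 1 - 1) x * w x)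
      volume ε 1 :=
    (((hw''int.mono_set hmono)).continuousOn_mul (sng2_contOn _ _ _ _ hne)).sub
      (((sng2_contOn _ _ _ _ hne).intervalIntegrable).mul_continuousOn hcw)
  have j3 : IntervalIntegrable (fun x => u x * w'' x - u'' x * w x) volume ε 1 :=
    ((hw''int.mono_set hmono).continuousOn_mul hcu).sub
      ((hu''int.mono_set hmono).mul_continuousOn hcw)
  have split : ∫ x in ε..1, Dfun r s a₁ a₂ d₁ d₂ u u'' w w'' x
      = (∫ x in ε..1,
          (u x * sng2 (d₁ * r * (r - 1)) (d₂ * s * (s - 1)) (r - 1 - 1) (s - 1 - 1) x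
            - u'' x * sng2 d₁ d₂ r s x))
        + ((∫ x in ε..1,
            (sng2 a₁ a₂ r s x * w'' x
              - sng2 (a₁ * r * (r - 1)) (a₂ * s * (s - 1)) (r - 1 - 1) (s - 1 - 1) x * w x))
          + ∫ x in ε..1, (u x * w'' x - u'' x * w x)) := by
    rw [← intervalIntegral.integral_add j2 j3, ← intervalIntegral.integral_add j1 (j2.add j3)]
    rfl
  rw [split, e1, e2, e3]
  simp only [Bfun]
  ring

lemma sng2_bound (c₁ c₂ p q : ℝ) (hqp : q ≤ p) :
    ∀ x ∈ Set.Ioc (0:ℝ) 1, |sng2 c₁ c₂ p q x| ≤ (|c₁| + |c₂|) * x ^ q :=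
  sng_bound c₁ c₂ p q hqp

lemma sng2_contOn' (c₁ c₂ p q : ℝ) {s : Set ℝ} (hs : ∀ x ∈ s, x ≠ 0) :
    ContinuousOn (sng2 c₁ c₂ p q) s := sng_contOn c₁ c₂ p q hs

lemma rpow_mul_bound (f g : ℝ → ℝ) (Cf Cg ef eg : ℝ) (hCf : 0 ≤ Cf) (hCg : 0 ≤ Cg)
    (hf : ∀ x ∈ Set.Ioc (0:ℝ) 1, |f x| ≤ Cf * x ^ ef)
    (hg : ∀ x ∈ Set.Ioc (0:ℝ) 1, |g x| ≤ Cg * x ^ eg) :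
    ∀ x ∈ Set.Ioc (0:ℝ) 1, |f x * g x| ≤ Cf * Cg * x ^ (ef + eg) := by
  intro x hx
  have h1 : 0 ≤ x ^ ef := (Real.rpow_pos_of_pos hx.1 _).le
  rw [abs_mul, Real.rpow_add hx.1]
  calc |f x| * |g x| ≤ (Cf * x ^ ef) * (Cg * x ^ eg) :=
        mul_le_mul (hf x hx) (hg x hx) (abs_nonneg _) (by positivity)
    _ = Cf * Cg * (x ^ ef * x ^ eg) := by ring

/-- The limit `ε → 0⁺` version: Green's identity on `(0,1]`. -/
lemma pos_side (r s : ℝ) (hs : -(1/2:ℝ) < s) (hsr : s ≤ r)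
    (u u' u'' w w' w'' : ℝ → ℝ) (a₁ a₂ d₁ d₂ : ℝ)
    (hu''int : IntervalIntegrable u'' volume 0 1)
    (hu''sq : IntervalIntegrable (fun x => u'' x ^ 2) volume 0 1)
    (hw''int : IntervalIntegrable w'' volume 0 1)
    (hw''sq : IntervalIntegrable (fun x => w'' x ^ 2) volume 0 1)
    (huFTC : ∀ x ∈ Set.Icc (0:ℝ) 1, u x = ∫ t in (0:ℝ)..x, u' t)
    (hu'FTC : ∀ x ∈ Set.Icc (0:ℝ) 1, u' x = ∫ t in (0:ℝ)..x, u'' t)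
    (hwFTC : ∀ x ∈ Set.Icc (0:ℝ) 1, w x = ∫ t in (0:ℝ)..x, w' t)
    (hw'FTC : ∀ x ∈ Set.Icc (0:ℝ) 1, w' x = ∫ t in (0:ℝ)..x, w'' t) :
    IntervalIntegrable (Dfun r s a₁ a₂ d₁ d₂ u u'' w w'') volume 0 1 ∧
    ∫ x in (0:ℝ)..1, Dfun r s a₁ a₂ d₁ d₂ u u'' w w'' x
      = Bfun r s a₁ a₂ d₁ d₂ u u' w w' 1 := by
  have contOfFTC : ∀ g g' : ℝ → ℝ, IntervalIntegrable g' volume 0 1 →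
      (∀ x ∈ Set.Icc (0:ℝ) 1, g x = ∫ t in (0:ℝ)..x, g' t) →
      ContinuousOn g (Set.Icc (0:ℝ) 1) := by
    intro g g' hint hrep
    have h := intervalIntegral.continuousOn_primitive_interval'
      (a := 0) (b₁ := 0) (b₂ := 1) hint (by simp)
    rw [Set.uIcc_of_le zero_le_one] at h
    exact h.congr hrep
  have hu'cont : ContinuousOn u' (Set.Icc (0:ℝ) 1) := contOfFTC u' u'' hu''int hu'FTC
  have hu'int : IntervalIntegrable u' volume 0 1 :=
    hu'cont.intervalIntegrable_of_Icc zero_le_one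
  have hucont : ContinuousOn u (Set.Icc (0:ℝ) 1) := contOfFTC u u' hu'int huFTC
  have hw'cont : ContinuousOn w' (Set.Icc (0:ℝ) 1) := contOfFTC w' w'' hw''int hw'FTC
  have hw'int : IntervalIntegrable w' volume 0 1 :=
    hw'cont.intervalIntegrable_of_Icc zero_le_one
  have hwcont : ContinuousOn w (Set.Icc (0:ℝ) 1) := contOfFTC w w' hw'int hwFTC
  have hu'0 : u' 0 = 0 := by simpa using hu'FTC 0 ⟨le_rfl, zero_le_one⟩
  have hw'0 : w' 0 = 0 := by simpa using hw'FTC 0 ⟨le_rfl, zero_le_one⟩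
  obtain ⟨Mu, hMu1, hMub⟩ := prim_bound_half u'' u' hu''int hu''sq hu'FTC
  obtain ⟨Nw, hNw1, hNwb⟩ := prim_bound_half w'' w' hw''int hw''sq hw'FTC
  have hub : ∀ x ∈ Set.Ioc (0:ℝ) 1, |u x| ≤ Mu * x ^ (3/2:ℝ) :=
    prim_bound_32 u' u Mu hMu1 hu'cont hMub hu'0 huFTC
  have hwb : ∀ x ∈ Set.Ioc (0:ℝ) 1, |w x| ≤ Nw * x ^ (3/2:ℝ) :=
    prim_bound_32 w' w Nw hNw1 hw'cont hNwb hw'0 hwFTC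
  have hMu0 : (0:ℝ) ≤ Mu := by linarith
  have hNw0 : (0:ℝ) ≤ Nw := by linarith
  have hIoc : Set.Ioc (0:ℝ) 1 ⊆ Set.Icc (0:ℝ) 1 := Set.Ioc_subset_Icc_self
  have hne : ∀ x ∈ Set.Ioc (0:ℝ) 1, x ≠ (0:ℝ) := fun x hx => ne_of_gt hx.1
  have hum : AEStronglyMeasurable u (volume.restrict (Set.Ioc (0:ℝ) 1)) :=
    (hucont.mono hIoc).aestronglyMeasurable measurableSet_Ioc
  have hwm : AEStronglyMeasurable w (volume.restrict (Set.Ioc (0:ℝ) 1)) :=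
    (hwcont.mono hIoc).aestronglyMeasurable measurableSet_Ioc
  have hu''m : AEStronglyMeasurable u'' (volume.restrict (Set.Ioc (0:ℝ) 1)) := by
    have h : IntegrableOn u'' (Set.Ioc (0:ℝ) 1) := by
      rwa [intervalIntegrable_iff, Set.uIoc_of_le zero_le_one] at hu''int
    exact h.aestronglyMeasurable
  have hw''m : AEStronglyMeasurable w'' (volume.restrict (Set.Ioc (0:ℝ) 1)) := by
    have h : IntegrableOn w'' (Set.Ioc (0:ℝ) 1) := by
      rwa [intervalIntegrable_iff, Set.uIoc_of_le zero_le_one] at hw''int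
    exact h.aestronglyMeasurable
  -- integrability of the six pieces
  have i1 : IntervalIntegrable (fun x =>
      u x * sng2 (d₁ * r * (r - 1)) (d₂ * s * (s - 1)) (r - 1 - 1) (s - 1 - 1) x)
      volume 0 1 := by
    refine integrableOn_of_bound_rpow _
      (Mu * (|d₁ * r * (r - 1)| + |d₂ * s * (s - 1)|)) (3/2 + (s - 1 - 1)) (by linarith)
      (hum.mul ((sng2_contOn' _ _ _ _ hne).aestronglyMeasurable measurableSet_Ioc)) ?_
    exact rpow_mul_bound u _ _ _ _ _ hMu0 (by positivity) hub
      (sng2_bound _ _ _ _ (by linarith))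
  have i2 : IntervalIntegrable (fun x => u'' x * sng2 d₁ d₂ r s x) volume 0 1 :=
    integrableOn_sq_mul u'' _ hu''sq hu''m
      ((sng2_contOn' _ _ _ _ hne).aestronglyMeasurable measurableSet_Ioc)
      _ s hs (sng2_bound d₁ d₂ r s hsr)
  have i3 : IntervalIntegrable (fun x => sng2 a₁ a₂ r s x * w'' x) volume 0 1 := by
    have h := integrableOn_sq_mul w'' _ hw''sq hw''m
      ((sng2_contOn' a₁ a₂ r s hne).aestronglyMeasurable measurableSet_Ioc)
      _ s hs (sng2_bound a₁ a₂ r s hsr)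
    simpa [mul_comm] using h
  have i4 : IntervalIntegrable (fun x =>
      sng2 (a₁ * r * (r - 1)) (a₂ * s * (s - 1)) (r - 1 - 1) (s - 1 - 1) x * w x)
      volume 0 1 := by
    refine integrableOn_of_bound_rpow _
      ((|a₁ * r * (r - 1)| + |a₂ * s * (s - 1)|) * Nw) ((s - 1 - 1) + 3/2) (by linarith)
      (((sng2_contOn' _ _ _ _ hne).aestronglyMeasurable measurableSet_Ioc).mul hwm) ?_
    exact rpow_mul_bound _ w _ _ _ _ (by positivity) hNw0
      (sng2_bound _ _ _ _ (by linarith)) hwb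
  have i5 : IntervalIntegrable (fun x => u x * w'' x) volume 0 1 :=
    hw''int.continuousOn_mul (by rwa [Set.uIcc_of_le zero_le_one])
  have i6 : IntervalIntegrable (fun x => u'' x * w x) volume 0 1 :=
    hu''int.mul_continuousOn (by rwa [Set.uIcc_of_le zero_le_one])
  have iD : IntervalIntegrable (Dfun r s a₁ a₂ d₁ d₂ u u'' w w'') volume 0 1 :=
    (i1.sub i2).add ((i3.sub i4).add (i5.sub i6))
  refine ⟨iD, ?_⟩
  -- boundary bracket bounds
  set pm : ℝ := min (s + 1/2) 2 with hpmdef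
  have hpm0 : 0 < pm := lt_min (by linarith) (by norm_num)
  have hpm2 : pm ≤ 2 := min_le_right _ _
  have hpms : pm ≤ s + 1/2 := min_le_left _ _
  have step : ∀ (f g : ℝ → ℝ) (Cf Cg ef eg : ℝ), 0 ≤ Cf → 0 ≤ Cg →
      (∀ x ∈ Set.Ioc (0:ℝ) 1, |f x| ≤ Cf * x ^ ef) →
      (∀ x ∈ Set.Ioc (0:ℝ) 1, |g x| ≤ Cg * x ^ eg) → pm ≤ ef + eg →
      ∀ y ∈ Set.Ioc (0:ℝ) 1, |f y * g y| ≤ Cf * Cg * y ^ pm := by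
    intro f g Cf Cg ef eg hCf hCg hf hg hpe y hy
    refine (rpow_mul_bound f g Cf Cg ef eg hCf hCg hf hg y hy).trans ?_
    exact mul_le_mul_of_nonneg_left
      (Real.rpow_le_rpow_of_exponent_ge hy.1 hy.2 hpe) (by positivity)
  have b1 := step u w' Mu Nw (3/2) (1/2) hMu0 hNw0 hub hNwb (by linarith)
  have b2 := step u' w Mu Nw (1/2) (3/2) hMu0 hNw0 hMub hwb (by linarith)
  have b3 := step u (sng2 (d₁ * r) (d₂ * s) (r - 1) (s - 1)) Mu (|d₁ * r| + |d₂ * s|)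
    (3/2) (s - 1) hMu0 (by positivity) hub (sng2_bound _ _ _ _ (by linarith)) (by linarith)
  have b4 := step u' (sng2 d₁ d₂ r s) Mu (|d₁| + |d₂|) (1/2) s hMu0 (by positivity)
    hMub (sng2_bound _ _ _ _ hsr) (by linarith)
  have b5 := step (sng2 a₁ a₂ r s) w' (|a₁| + |a₂|) Nw s (1/2) (by positivity) hNw0
    (sng2_bound _ _ _ _ hsr) hNwb (by linarith)
  have b6 := step (sng2 (a₁ * r) (a₂ * s) (r - 1) (s - 1)) w (|a₁ * r| + |a₂ * s|) Nw
    (s - 1) (3/2) (by positivity) hNw0 (sng2_bound _ _ _ _ (by linarith)) hwb (by linarith)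
  set CB : ℝ := Mu * Nw + Mu * Nw + (Mu * (|d₁ * r| + |d₂ * s|) + Mu * (|d₁| + |d₂|)
    + ((|a₁| + |a₂|) * Nw + (|a₁ * r| + |a₂ * s|) * Nw)) with hCBdef
  have hBbd : ∀ y ∈ Set.Ioc (0:ℝ) 1,
      |Bfun r s a₁ a₂ d₁ d₂ u u' w w' y| ≤ CB * y ^ pm := by
    intro y hy
    have hsum : |Bfun r s a₁ a₂ d₁ d₂ u u' w w' y|
        ≤ (|u y * w' y| + |u' y * w y|)
          + ((|u y * sng2 (d₁ * r) (d₂ * s) (r - 1) (s - 1) y| + |u' y * sng2 d₁ d₂ r s y|)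
            + (|sng2 a₁ a₂ r s y * w' y|
              + |sng2 (a₁ * r) (a₂ * s) (r - 1) (s - 1) y * w y|)) := by
      simp only [Bfun]
      exact (abs_add_le _ _).trans (add_le_add (abs_sub _ _)
        ((abs_add_le _ _).trans (add_le_add (abs_sub _ _) (abs_sub _ _))))
    refine hsum.trans ?_
    have e : CB * y ^ pm = Mu * Nw * y ^ pm + Mu * Nw * y ^ pm
        + (Mu * (|d₁ * r| + |d₂ * s|) * y ^ pm + Mu * (|d₁| + |d₂|) * y ^ pm
          + ((|a₁| + |a₂|) * Nw * y ^ pm + (|a₁ * r| + |a₂ * s|) * Nw * y ^ pm)) := by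
      rw [hCBdef]; ring
    rw [e]
    linarith [b1 y hy, b2 y hy, b3 y hy, b4 y hy, b5 y hy, b6 y hy]
  -- the filter
  haveI hNB : (nhdsWithin (0:ℝ) (Set.Ioc (0:ℝ) 1)).NeBot := by
    rw [nhdsWithin_Ioc_eq_nhdsGT zero_lt_one]
    infer_instance
  -- tendsto of the boundary bracket
  have hBto : Filter.Tendsto (Bfun r s a₁ a₂ d₁ d₂ u u' w w')
      (nhdsWithin (0:ℝ) (Set.Ioc (0:ℝ) 1)) (nhds 0) := by
    rw [tendsto_zero_iff_abs_tendsto_zero]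
    refine squeeze_zero' (g := fun y => CB * y ^ pm) ?_ ?_ ?_
    · filter_upwards with y using abs_nonneg _
    · filter_upwards [self_mem_nhdsWithin] with y hy using hBbd y hy
    · have hc : Filter.Tendsto (fun y : ℝ => y ^ pm)
          (nhdsWithin (0:ℝ) (Set.Ioc (0:ℝ) 1)) (nhds 0) := by
        have h := (Real.continuousAt_rpow_const 0 pm (Or.inr hpm0.le)).tendsto
        rw [Real.zero_rpow hpm0.ne'] at h
        exact h.mono_left nhdsWithin_le_nhds
      have := hc.const_mul CB
      simpa using this
  -- tendsto of the truncated integral to the full integral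
  have hInt : IntegrableOn (Dfun r s a₁ a₂ d₁ d₂ u u'' w w'') (Set.Icc (0:ℝ) 1) := by
    rw [integrableOn_Icc_iff_integrableOn_Ioc]
    rwa [intervalIntegrable_iff, Set.uIoc_of_le zero_le_one] at iD
  have hgcont : ContinuousOn (fun ε => ∫ x in ε..1, Dfun r s a₁ a₂ d₁ d₂ u u'' w w'' x)
      (Set.Icc (0:ℝ) 1) := by
    have h := intervalIntegral.continuousOn_primitive_interval_left
      (f := Dfun r s a₁ a₂ d₁ d₂ u u'' w w'') (a := 0) (b := 1) (μ := volume)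
      (by rwa [Set.uIcc_of_le zero_le_one])
    rwa [Set.uIcc_of_le zero_le_one] at h
  have hT1 : Filter.Tendsto (fun ε => ∫ x in ε..1, Dfun r s a₁ a₂ d₁ d₂ u u'' w w'' x)
      (nhdsWithin (0:ℝ) (Set.Ioc (0:ℝ) 1))
      (nhds (∫ x in (0:ℝ)..1, Dfun r s a₁ a₂ d₁ d₂ u u'' w w'' x)) := by
    have h := hgcont 0 ⟨le_rfl, zero_le_one⟩
    exact h.mono_left (nhdsWithin_mono 0 hIoc)
  have hT2 : Filter.Tendsto (fun ε => ∫ x in ε..1, Dfun r s a₁ a₂ d₁ d₂ u u'' w w'' x)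
      (nhdsWithin (0:ℝ) (Set.Ioc (0:ℝ) 1))
      (nhds (Bfun r s a₁ a₂ d₁ d₂ u u' w w' 1 - 0)) := by
    refine Filter.Tendsto.congr' ?_ (tendsto_const_nhds.sub hBto)
    filter_upwards [self_mem_nhdsWithin] with ε hε
    exact (pos_eps r s ε hε u u' u'' w w' w'' a₁ a₂ d₁ d₂ hu''int hw''int hu'int hw'int
      huFTC hu'FTC hwFTC hw'FTC).symm
  have := tendsto_nhds_unique hT1 hT2
  rw [this, sub_zero]

/-- positive-side integrability of `(A_n f)·g` in its "nice" form. -/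
lemma half_integrable (r s c V g : ℝ) (hs : -(1/2:ℝ) < s) (hsr : s ≤ r) (hs32 : s ≤ 3/2)
    (hg : 0 ≤ g) (u u' u'' w w' w'' : ℝ → ℝ) (a₁ a₂ d₁ d₂ : ℝ)
    (hu''int : IntervalIntegrable u'' volume 0 1)
    (hu''sq : IntervalIntegrable (fun x => u'' x ^ 2) volume 0 1)
    (hw''int : IntervalIntegrable w'' volume 0 1)
    (hw''sq : IntervalIntegrable (fun x => w'' x ^ 2) volume 0 1)
    (huFTC : ∀ x ∈ Set.Icc (0:ℝ) 1, u x = ∫ t in (0:ℝ)..x, u' t)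
    (hu'FTC : ∀ x ∈ Set.Icc (0:ℝ) 1, u' x = ∫ t in (0:ℝ)..x, u'' t)
    (hwFTC : ∀ x ∈ Set.Icc (0:ℝ) 1, w x = ∫ t in (0:ℝ)..x, w' t)
    (hw'FTC : ∀ x ∈ Set.Icc (0:ℝ) 1, w' x = ∫ t in (0:ℝ)..x, w'' t) :
    IntervalIntegrable (fun x =>
      (-(u'' x) + (c / x ^ 2) * u x + V * x ^ g * (u x + sng2 a₁ a₂ r s x))
        * (w x + sng2 d₁ d₂ r s x)) volume 0 1 := by
  have contOfFTC : ∀ g g' : ℝ → ℝ, IntervalIntegrable g' volume 0 1 →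
      (∀ x ∈ Set.Icc (0:ℝ) 1, g x = ∫ t in (0:ℝ)..x, g' t) →
      ContinuousOn g (Set.Icc (0:ℝ) 1) := by
    intro g g' hint hrep
    have h := intervalIntegral.continuousOn_primitive_interval'
      (a := 0) (b₁ := 0) (b₂ := 1) hint (by simp)
    rw [Set.uIcc_of_le zero_le_one] at h
    exact h.congr hrep
  have hu'cont : ContinuousOn u' (Set.Icc (0:ℝ) 1) := contOfFTC u' u'' hu''int hu'FTC
  have hu'int : IntervalIntegrable u' volume 0 1 :=
    hu'cont.intervalIntegrable_of_Icc zero_le_one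
  have hucont : ContinuousOn u (Set.Icc (0:ℝ) 1) := contOfFTC u u' hu'int huFTC
  have hw'cont : ContinuousOn w' (Set.Icc (0:ℝ) 1) := contOfFTC w' w'' hw''int hw'FTC
  have hw'int : IntervalIntegrable w' volume 0 1 :=
    hw'cont.intervalIntegrable_of_Icc zero_le_one
  have hwcont : ContinuousOn w (Set.Icc (0:ℝ) 1) := contOfFTC w w' hw'int hwFTC
  have hu'0 : u' 0 = 0 := by simpa using hu'FTC 0 ⟨le_rfl, zero_le_one⟩
  have hw'0 : w' 0 = 0 := by simpa using hw'FTC 0 ⟨le_rfl, zero_le_one⟩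
  obtain ⟨Mu, hMu1, hMub⟩ := prim_bound_half u'' u' hu''int hu''sq hu'FTC
  obtain ⟨Nw, hNw1, hNwb⟩ := prim_bound_half w'' w' hw''int hw''sq hw'FTC
  have hub : ∀ x ∈ Set.Ioc (0:ℝ) 1, |u x| ≤ Mu * x ^ (3/2:ℝ) :=
    prim_bound_32 u' u Mu hMu1 hu'cont hMub hu'0 huFTC
  have hwb : ∀ x ∈ Set.Ioc (0:ℝ) 1, |w x| ≤ Nw * x ^ (3/2:ℝ) :=
    prim_bound_32 w' w Nw hNw1 hw'cont hNwb hw'0 hwFTC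
  have hMu0 : (0:ℝ) ≤ Mu := by linarith
  have hNw0 : (0:ℝ) ≤ Nw := by linarith
  have hIoc : Set.Ioc (0:ℝ) 1 ⊆ Set.Icc (0:ℝ) 1 := Set.Ioc_subset_Icc_self
  have hne : ∀ x ∈ Set.Ioc (0:ℝ) 1, x ≠ (0:ℝ) := fun x hx => ne_of_gt hx.1
  have hum : AEStronglyMeasurable u (volume.restrict (Set.Ioc (0:ℝ) 1)) :=
    (hucont.mono hIoc).aestronglyMeasurable measurableSet_Ioc
  have hu''m : AEStronglyMeasurable u'' (volume.restrict (Set.Ioc (0:ℝ) 1)) := by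
    have h : IntegrableOn u'' (Set.Ioc (0:ℝ) 1) := by
      rwa [intervalIntegrable_iff, Set.uIoc_of_le zero_le_one] at hu''int
    exact h.aestronglyMeasurable
  -- continuity of the combined second factor and the potential part on `Ioc`
  have hWQcont : ContinuousOn (fun x => w x + sng2 d₁ d₂ r s x) (Set.Ioc (0:ℝ) 1) :=
    (hwcont.mono hIoc).add (sng_contOn d₁ d₂ r s hne)
  have hWQm : AEStronglyMeasurable (fun x => w x + sng2 d₁ d₂ r s x)
      (volume.restrict (Set.Ioc (0:ℝ) 1)) :=
    hWQcont.aestronglyMeasurable measurableSet_Ioc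
  -- bound on w + Q
  have hWQb : ∀ x ∈ Set.Ioc (0:ℝ) 1,
      |w x + sng2 d₁ d₂ r s x| ≤ (Nw + (|d₁| + |d₂|)) * x ^ s := by
    intro x hx
    have h1 := hwb x hx
    have h2 := sng_bound d₁ d₂ r s hsr x hx
    have h3 : x ^ (3/2:ℝ) ≤ x ^ s := Real.rpow_le_rpow_of_exponent_ge hx.1 hx.2 hs32
    have h4 : (0:ℝ) < x ^ s := Real.rpow_pos_of_pos hx.1 _
    calc |w x + sng2 d₁ d₂ r s x| ≤ |w x| + |sng2 d₁ d₂ r s x| := abs_add_le _ _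
      _ ≤ Nw * x ^ (3/2:ℝ) + (|d₁| + |d₂|) * x ^ s := add_le_add h1 h2
      _ ≤ (Nw + (|d₁| + |d₂|)) * x ^ s := by nlinarith
  have hUFb : ∀ x ∈ Set.Ioc (0:ℝ) 1,
      |u x + sng2 a₁ a₂ r s x| ≤ (Mu + (|a₁| + |a₂|)) * x ^ s := by
    intro x hx
    have h1 := hub x hx
    have h2 := sng_bound a₁ a₂ r s hsr x hx
    have h3 : x ^ (3/2:ℝ) ≤ x ^ s := Real.rpow_le_rpow_of_exponent_ge hx.1 hx.2 hs32
    have h4 : (0:ℝ) < x ^ s := Real.rpow_pos_of_pos hx.1 _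
    calc |u x + sng2 a₁ a₂ r s x| ≤ |u x| + |sng2 a₁ a₂ r s x| := abs_add_le _ _
      _ ≤ Mu * x ^ (3/2:ℝ) + (|a₁| + |a₂|) * x ^ s := add_le_add h1 h2
      _ ≤ (Mu + (|a₁| + |a₂|)) * x ^ s := by nlinarith
  -- T1 : -(u'' x) * (w + Q)
  have hT1 : IntervalIntegrable (fun x => -(u'' x) * (w x + sng2 d₁ d₂ r s x)) volume 0 1 := by
    have h := integrableOn_sq_mul u'' (fun x => w x + sng2 d₁ d₂ r s x) hu''sq hu''m hWQm
      _ s hs hWQb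
    have := h.neg
    simpa [neg_mul, Pi.neg_def] using this
  -- T2 : (c/x²) u (w + Q)
  have hT2 : IntervalIntegrable
      (fun x => (c / x ^ 2) * u x * (w x + sng2 d₁ d₂ r s x)) volume 0 1 := by
    refine integrableOn_of_bound_rpow _ (|c| * Mu * (Nw + (|d₁| + |d₂|)))
      (-(1/2) + s) (by linarith) ?_ ?_
    · refine AEStronglyMeasurable.mul (AEStronglyMeasurable.mul ?_
        (hum.mono_measure le_rfl)) hWQm
      refine (ContinuousOn.aestronglyMeasurable ?_ measurableSet_Ioc)
      exact continuousOn_const.div (continuousOn_pow 2)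
        (fun x hx => pow_ne_zero 2 (hne x hx))
    · intro x hx
      have hx0 : 0 < x := hx.1
      have h1 : |c / x ^ 2 * u x| ≤ |c| * Mu * x ^ (-(1/2):ℝ) := by
        rw [abs_mul, abs_div]
        have h2 : |u x| ≤ Mu * x ^ (3/2:ℝ) := hub x hx
        have h3 : |x ^ 2| = x ^ 2 := abs_of_pos (by positivity)
        rw [h3]
        have h4 : x ^ (2:ℕ) = x ^ (2:ℝ) := by
          rw [← Real.rpow_natCast x 2]; norm_num
        have h5 : x ^ (3/2:ℝ) / x ^ (2:ℝ) = x ^ (-(1/2):ℝ) := by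
          rw [← Real.rpow_sub hx0]; norm_num
        calc |c| / x ^ 2 * |u x| ≤ |c| / x ^ 2 * (Mu * x ^ (3/2:ℝ)) := by
              exact mul_le_mul_of_nonneg_left h2 (by positivity)
          _ = |c| * Mu * (x ^ (3/2:ℝ) / x ^ (2:ℝ)) := by rw [← h4]; ring
          _ = |c| * Mu * x ^ (-(1/2):ℝ) := by rw [h5]
      calc |c / x ^ 2 * u x * (w x + sng2 d₁ d₂ r s x)|
          = |c / x ^ 2 * u x| * |w x + sng2 d₁ d₂ r s x| := abs_mul _ _
        _ ≤ (|c| * Mu * x ^ (-(1/2):ℝ)) * ((Nw + (|d₁| + |d₂|)) * x ^ s) :=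
            mul_le_mul h1 (hWQb x hx) (abs_nonneg _) (by positivity)
        _ = |c| * Mu * (Nw + (|d₁| + |d₂|)) * (x ^ (-(1/2):ℝ) * x ^ s) := by ring
        _ = |c| * Mu * (Nw + (|d₁| + |d₂|)) * x ^ (-(1/2) + s) := by
            rw [← Real.rpow_add hx0]
  -- T3 : V x^g (u + F)(w + Q)
  have hT3 : IntervalIntegrable (fun x =>
      V * x ^ g * (u x + sng2 a₁ a₂ r s x) * (w x + sng2 d₁ d₂ r s x)) volume 0 1 := by
    refine integrableOn_of_bound_rpow _
      (|V| * (Mu + (|a₁| + |a₂|)) * (Nw + (|d₁| + |d₂|))) (s + s) (by linarith) ?_ ?_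
    · refine AEStronglyMeasurable.mul (AEStronglyMeasurable.mul ?_ ?_) hWQm
      · refine (ContinuousOn.aestronglyMeasurable ?_ measurableSet_Ioc)
        exact continuousOn_const.mul
          (continuousOn_id.rpow_const fun x hx => Or.inl (hne x hx))
      · exact ((hucont.mono hIoc).add (sng_contOn a₁ a₂ r s hne)).aestronglyMeasurable
          measurableSet_Ioc
    · intro x hx
      have hx0 : 0 < x := hx.1
      have hxg : x ^ g ≤ 1 := Real.rpow_le_one hx0.le hx.2 hg
      have hxg0 : 0 < x ^ g := Real.rpow_pos_of_pos hx0 _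
      have h1 : |V * x ^ g| ≤ |V| := by
        rw [abs_mul, abs_of_pos hxg0]
        nlinarith [abs_nonneg V]
      calc |V * x ^ g * (u x + sng2 a₁ a₂ r s x) * (w x + sng2 d₁ d₂ r s x)|
          = |V * x ^ g| * |u x + sng2 a₁ a₂ r s x| * |w x + sng2 d₁ d₂ r s x| := by
            rw [abs_mul, abs_mul]
        _ ≤ |V| * ((Mu + (|a₁| + |a₂|)) * x ^ s) * ((Nw + (|d₁| + |d₂|)) * x ^ s) := by
            refine mul_le_mul (mul_le_mul h1 (hUFb x hx) (abs_nonneg _) (abs_nonneg _))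
              (hWQb x hx) (abs_nonneg _) ?_
            positivity
        _ = |V| * (Mu + (|a₁| + |a₂|)) * (Nw + (|d₁| + |d₂|)) * (x ^ s * x ^ s) := by ring
        _ = |V| * (Mu + (|a₁| + |a₂|)) * (Nw + (|d₁| + |d₂|)) * x ^ (s + s) := by
            rw [← Real.rpow_add hx0]
  have hsplit : (fun x =>
      (-(u'' x) + (c / x ^ 2) * u x + V * x ^ g * (u x + sng2 a₁ a₂ r s x))
        * (w x + sng2 d₁ d₂ r s x))
      = fun x => (-(u'' x) * (w x + sng2 d₁ d₂ r s x))
        + (((c / x ^ 2) * u x * (w x + sng2 d₁ d₂ r s x))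
          + (V * x ^ g * (u x + sng2 a₁ a₂ r s x) * (w x + sng2 d₁ d₂ r s x))) := by
    funext x; ring
  rw [hsplit]
  exact hT1.add (hT2.add hT3)

/-- transport of FTC representations to `[0,1]` and to the reflected function. -/
lemma reflect_rep (g g' : ℝ → ℝ) (hint : IntervalIntegrable g' volume (-1) 1)
    (hrep : ∀ x ∈ Set.Icc (-1:ℝ) 1, g x = g (-1) + ∫ t in (-1:ℝ)..x, g' t)
    (h0 : g 0 = 0) :
    (∀ x ∈ Set.Icc (0:ℝ) 1, g x = ∫ t in (0:ℝ)..x, g' t) ∧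
    (∀ x ∈ Set.Icc (0:ℝ) 1, g (-x) = ∫ t in (0:ℝ)..x, -g' (-t)) := by
  have hsub : ∀ y : ℝ, y ∈ Set.Icc (-1:ℝ) 1 → IntervalIntegrable g' volume (-1) y := by
    intro y hy
    refine hint.mono_set ?_
    rw [Set.uIcc_of_le hy.1, Set.uIcc_of_le (by norm_num : (-1:ℝ) ≤ 1)]
    exact Set.Icc_subset_Icc le_rfl hy.2
  have key : ∀ y ∈ Set.Icc (-1:ℝ) 1, g y = ∫ t in (0:ℝ)..y, g' t := by
    intro y hy
    have h1 := hrep y hy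
    have h2 := hrep 0 (by norm_num)
    rw [h0] at h2
    have h3 := intervalIntegral.integral_interval_sub_left (hsub y hy) (hsub 0 (by norm_num))
    rw [h1, ← h3]
    linarith
  constructor
  · intro x hx
    exact key x ⟨by linarith [hx.1], hx.2⟩
  · intro x hx
    have h1 : g (-x) = ∫ t in (0:ℝ)..(-x), g' t :=
      key (-x) ⟨by linarith [hx.2], by linarith [hx.1]⟩
    rw [h1, intervalIntegral.integral_neg]
    have h2 : ∫ t in (0:ℝ)..x, g' (-t) = ∫ t in (-x)..(0:ℝ), g' t := by
      simpa using intervalIntegral.integral_comp_neg (a := 0) (b := x) (f := g')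
    rw [h2, intervalIntegral.integral_symm]

end AnSymmetricAux

set_option maxHeartbeats 2000000 in
/-- **Symmetry of the operator `A_n` on its domain `D(A)`.**
Let `ν ∈ (0,1)`, `c_ν := ν² - 1/4`, `γ > 0`, `n ∈ ℕ*`. Let `f = f_r + f_s` and
`g = g_r + g_s` belong to `D(A)`: the regular parts are `H²` on `[-1,1]`
(encoded via the fundamental theorem of calculus) with vanishing Cauchy data
at `0`; the singular parts are combinations of `|x|^(ν+1/2)`, `|x|^(-ν+1/2)` on
each side of `0` with coefficients satisfying the transmission conditions; and
`f(±1) = g(±1) = 0`. With `A_n h := -h_r'' + (c_ν/x²) h_r + (nπ)² |x|^(2γ) h`,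
we have `∫₋₁¹ (A_n f) g = ∫₋₁¹ f (A_n g)`. -/
theorem An_symmetric
    (ν : ℝ) (hν : ν ∈ Set.Ioo (0:ℝ) 1)
    (γ : ℝ) (hγ : 0 < γ) (n : ℕ) (hn : 0 < n)
    (fr fr' fr'' gr gr' gr'' fs gs : ℝ → ℝ)
    (a₁ a₂ b₁ b₂ d₁ d₂ e₁ e₂ : ℝ)
    -- regular part of f : H² on [-1,1] with f_r(0) = f_r'(0) = 0
    (hfr''int : IntervalIntegrable fr'' volume (-1) 1)
    (hfr''sq : IntervalIntegrable (fun x => fr'' x ^ 2) volume (-1) 1)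
    (hfrFTC : ∀ x ∈ Set.Icc (-1:ℝ) 1, fr x = fr (-1) + ∫ t in (-1:ℝ)..x, fr' t)
    (hfr'FTC : ∀ x ∈ Set.Icc (-1:ℝ) 1, fr' x = fr' (-1) + ∫ t in (-1:ℝ)..x, fr'' t)
    (hfr0 : fr 0 = 0) (hfr'0 : fr' 0 = 0)
    -- regular part of g
    (hgr''int : IntervalIntegrable gr'' volume (-1) 1)
    (hgr''sq : IntervalIntegrable (fun x => gr'' x ^ 2) volume (-1) 1)
    (hgrFTC : ∀ x ∈ Set.Icc (-1:ℝ) 1, gr x = gr (-1) + ∫ t in (-1:ℝ)..x, gr' t)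
    (hgr'FTC : ∀ x ∈ Set.Icc (-1:ℝ) 1, gr' x = gr' (-1) + ∫ t in (-1:ℝ)..x, gr'' t)
    (hgr0 : gr 0 = 0) (hgr'0 : gr' 0 = 0)
    -- singular parts
    (hfsP : ∀ x ∈ Set.Ioc (0:ℝ) 1,
        fs x = a₁ * |x| ^ (ν + 1/2) + a₂ * |x| ^ (-ν + 1/2))
    (hfsM : ∀ x ∈ Set.Ico (-1:ℝ) 0,
        fs x = b₁ * |x| ^ (ν + 1/2) + b₂ * |x| ^ (-ν + 1/2))
    (hgsP : ∀ x ∈ Set.Ioc (0:ℝ) 1,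
        gs x = d₁ * |x| ^ (ν + 1/2) + d₂ * |x| ^ (-ν + 1/2))
    (hgsM : ∀ x ∈ Set.Ico (-1:ℝ) 0,
        gs x = e₁ * |x| ^ (ν + 1/2) + e₂ * |x| ^ (-ν + 1/2))
    -- transmission conditions for f and for g
    (hfT1 : b₁ + b₂ + a₁ + a₂ = 0)
    (hfT2 : (ν + 1/2) * b₁ + (-ν + 1/2) * b₂ = (ν + 1/2) * a₁ + (-ν + 1/2) * a₂)
    (hgT1 : e₁ + e₂ + d₁ + d₂ = 0)
    (hgT2 : (ν + 1/2) * e₁ + (-ν + 1/2) * e₂ = (ν + 1/2) * d₁ + (-ν + 1/2) * d₂)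
    -- Dirichlet boundary conditions at ±1
    (hf1 : fr 1 + fs 1 = 0) (hfm1 : fr (-1) + fs (-1) = 0)
    (hg1 : gr 1 + gs 1 = 0) (hgm1 : gr (-1) + gs (-1) = 0) :
    (∫ x in (-1:ℝ)..1,
        (-(fr'' x) + ((ν ^ 2 - 1/4) / x ^ 2) * fr x
          + ((n : ℝ) * π) ^ 2 * |x| ^ (2*γ) * (fr x + fs x)) * (gr x + gs x))
      = ∫ x in (-1:ℝ)..1,
          (fr x + fs x) *
            (-(gr'' x) + ((ν ^ 2 - 1/4) / x ^ 2) * gr x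
              + ((n : ℝ) * π) ^ 2 * |x| ^ (2*γ) * (gr x + gs x)) := by
  obtain ⟨hν0, hν1⟩ := hν
  have hs : -(1/2:ℝ) < -ν + 1/2 := by linarith
  have hsr : -ν + 1/2 ≤ ν + 1/2 := by linarith
  have hs32 : -ν + 1/2 ≤ (3/2:ℝ) := by linarith
  have hg2 : (0:ℝ) ≤ 2 * γ := by linarith
  have hm11 : (-1:ℝ) ≤ 1 := by norm_num
  -- continuity and integrability of first derivatives on [-1,1]
  have contOf : ∀ h h' : ℝ → ℝ, IntervalIntegrable h' volume (-1) 1 →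
      (∀ x ∈ Set.Icc (-1:ℝ) 1, h x = h (-1) + ∫ t in (-1:ℝ)..x, h' t) →
      ContinuousOn h (Set.Icc (-1:ℝ) 1) := by
    intro h h' hint hrep
    have hc := intervalIntegral.continuousOn_primitive_interval'
      (a := -1) (b₁ := -1) (b₂ := 1) hint (by simp)
    rw [Set.uIcc_of_le hm11] at hc
    exact ContinuousOn.congr ((continuousOn_const (c := h (-1))).add hc) hrep
  have hfr'cont : ContinuousOn fr' (Set.Icc (-1:ℝ) 1) := contOf fr' fr'' hfr''int hfr'FTC
  have hfr'int : IntervalIntegrable fr' volume (-1) 1 :=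
    hfr'cont.intervalIntegrable_of_Icc hm11
  have hgr'cont : ContinuousOn gr' (Set.Icc (-1:ℝ) 1) := contOf gr' gr'' hgr''int hgr'FTC
  have hgr'int : IntervalIntegrable gr' volume (-1) 1 :=
    hgr'cont.intervalIntegrable_of_Icc hm11
  -- FTC representations on [0,1], direct & reflected
  obtain ⟨hfrP, hfrM⟩ := reflect_rep fr fr' hfr'int hfrFTC hfr0
  obtain ⟨hfr'P, hfr'M⟩ := reflect_rep fr' fr'' hfr''int hfr'FTC hfr'0
  obtain ⟨hgrP, hgrM⟩ := reflect_rep gr gr' hgr'int hgrFTC hgr0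
  obtain ⟨hgr'P, hgr'M⟩ := reflect_rep gr' gr'' hgr''int hgr'FTC hgr'0
  have hfr'Mneg : ∀ x ∈ Set.Icc (0:ℝ) 1, -fr' (-x) = ∫ t in (0:ℝ)..x, fr'' (-t) := by
    intro x hx
    rw [hfr'M x hx, ← intervalIntegral.integral_neg]
    simp only [neg_neg]
  have hgr'Mneg : ∀ x ∈ Set.Icc (0:ℝ) 1, -gr' (-x) = ∫ t in (0:ℝ)..x, gr'' (-t) := by
    intro x hx
    rw [hgr'M x hx, ← intervalIntegral.integral_neg]
    simp only [neg_neg]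
  -- integrability restrictions
  have msubP : ∀ {f : ℝ → ℝ}, IntervalIntegrable f volume (-1) 1 →
      IntervalIntegrable f volume 0 1 := by
    intro f h
    refine h.mono_set ?_
    rw [Set.uIcc_of_le zero_le_one, Set.uIcc_of_le hm11]
    exact Set.Icc_subset_Icc (by norm_num) le_rfl
  have msubM : ∀ {f : ℝ → ℝ}, IntervalIntegrable f volume (-1) 1 →
      IntervalIntegrable f volume (-1) 0 := by
    intro f h
    refine h.mono_set ?_
    rw [Set.uIcc_of_le (by norm_num : (-1:ℝ) ≤ 0), Set.uIcc_of_le hm11]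
    exact Set.Icc_subset_Icc le_rfl (by norm_num)
  have reflInt : ∀ {f : ℝ → ℝ}, IntervalIntegrable f volume (-1) 0 →
      IntervalIntegrable (fun x => f (-x)) volume 0 1 := by
    intro f h
    have h2 := (IntervalIntegrable.iff_comp_neg (f := f) (a := (-1:ℝ)) (b := 0)).mp h
    have h3 := h2.symm
    simpa using h3
  have reflInt' : ∀ {f : ℝ → ℝ}, IntervalIntegrable (fun x => f (-x)) volume 0 1 →
      IntervalIntegrable f volume (-1) 0 := by
    intro f h
    refine (IntervalIntegrable.iff_comp_neg (f := f) (a := (-1:ℝ)) (b := 0)).mpr ?_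
    have h2 := h.symm
    convert h2 using 2 <;> norm_num
  have hfr''01 := msubP hfr''int
  have hfr''sq01 := msubP hfr''sq
  have hgr''01 := msubP hgr''int
  have hgr''sq01 := msubP hgr''sq
  have hfr''M : IntervalIntegrable (fun x => fr'' (-x)) volume 0 1 := reflInt (msubM hfr''int)
  have hfr''sqM : IntervalIntegrable (fun x => fr'' (-x) ^ 2) volume 0 1 :=
    reflInt (msubM hfr''sq)
  have hgr''M : IntervalIntegrable (fun x => gr'' (-x)) volume 0 1 := reflInt (msubM hgr''int)
  have hgr''sqM : IntervalIntegrable (fun x => gr'' (-x) ^ 2) volume 0 1 :=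
    reflInt (msubM hgr''sq)
  -- Green identities on the two halves
  have posP := pos_side (ν + 1/2) (-ν + 1/2) hs hsr fr fr' fr'' gr gr' gr'' a₁ a₂ d₁ d₂
    hfr''01 hfr''sq01 hgr''01 hgr''sq01 hfrP hfr'P hgrP hgr'P
  have posM := pos_side (ν + 1/2) (-ν + 1/2) hs hsr (fun x => fr (-x)) (fun x => -fr' (-x))
    (fun x => fr'' (-x)) (fun x => gr (-x)) (fun x => -gr' (-x)) (fun x => gr'' (-x))
    b₁ b₂ e₁ e₂ hfr''M hfr''sqM hgr''M hgr''sqM hfrM hfr'Mneg hgrM hgr'Mneg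
  -- nice-form integrability on [0,1]
  have hLn := half_integrable (ν + 1/2) (-ν + 1/2) (ν ^ 2 - 1/4) (((n : ℝ) * π) ^ 2) (2*γ)
    hs hsr hs32 hg2 fr fr' fr'' gr gr' gr'' a₁ a₂ d₁ d₂
    hfr''01 hfr''sq01 hgr''01 hgr''sq01 hfrP hfr'P hgrP hgr'P
  have hRn := half_integrable (ν + 1/2) (-ν + 1/2) (ν ^ 2 - 1/4) (((n : ℝ) * π) ^ 2) (2*γ)
    hs hsr hs32 hg2 gr gr' gr'' fr fr' fr'' d₁ d₂ a₁ a₂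
    hgr''01 hgr''sq01 hfr''01 hfr''sq01 hgrP hgr'P hfrP hfr'P
  have hLnM := half_integrable (ν + 1/2) (-ν + 1/2) (ν ^ 2 - 1/4) (((n : ℝ) * π) ^ 2) (2*γ)
    hs hsr hs32 hg2 (fun x => fr (-x)) (fun x => -fr' (-x)) (fun x => fr'' (-x))
    (fun x => gr (-x)) (fun x => -gr' (-x)) (fun x => gr'' (-x)) b₁ b₂ e₁ e₂
    hfr''M hfr''sqM hgr''M hgr''sqM hfrM hfr'Mneg hgrM hgr'Mneg
  have hRnM := half_integrable (ν + 1/2) (-ν + 1/2) (ν ^ 2 - 1/4) (((n : ℝ) * π) ^ 2) (2*γ)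
    hs hsr hs32 hg2 (fun x => gr (-x)) (fun x => -gr' (-x)) (fun x => gr'' (-x))
    (fun x => fr (-x)) (fun x => -fr' (-x)) (fun x => fr'' (-x)) e₁ e₂ b₁ b₂
    hgr''M hgr''sqM hfr''M hfr''sqM hgrM hgr'Mneg hfrM hfr'Mneg
  -- pointwise singular-part formulas on `Ioc 0 1`
  have hfs01 : ∀ x ∈ Set.Ioc (0:ℝ) 1, fs x = sng2 a₁ a₂ (ν + 1/2) (-ν + 1/2) x := by
    intro x hx
    rw [hfsP x hx, abs_of_pos hx.1]; rfl
  have hgs01 : ∀ x ∈ Set.Ioc (0:ℝ) 1, gs x = sng2 d₁ d₂ (ν + 1/2) (-ν + 1/2) x := by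
    intro x hx
    rw [hgsP x hx, abs_of_pos hx.1]; rfl
  have hfsM01 : ∀ x ∈ Set.Ioc (0:ℝ) 1, fs (-x) = sng2 b₁ b₂ (ν + 1/2) (-ν + 1/2) x := by
    intro x hx
    rw [hfsM (-x) ⟨by linarith [hx.2], by linarith [hx.1]⟩, abs_neg, abs_of_pos hx.1]; rfl
  have hgsM01 : ∀ x ∈ Set.Ioc (0:ℝ) 1, gs (-x) = sng2 e₁ e₂ (ν + 1/2) (-ν + 1/2) x := by
    intro x hx
    rw [hgsM (-x) ⟨by linarith [hx.2], by linarith [hx.1]⟩, abs_neg, abs_of_pos hx.1]; rfl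
  -- integrability of the actual integrands on the two halves
  have hLint01 : IntervalIntegrable (fun x =>
      (-(fr'' x) + ((ν ^ 2 - 1/4) / x ^ 2) * fr x
        + ((n : ℝ) * π) ^ 2 * |x| ^ (2*γ) * (fr x + fs x)) * (gr x + gs x)) volume 0 1 := by
    rw [intervalIntegrable_iff, Set.uIoc_of_le zero_le_one]
    rw [intervalIntegrable_iff, Set.uIoc_of_le zero_le_one] at hLn
    refine hLn.congr_fun (fun x hx => ?_) measurableSet_Ioc
    rw [hfs01 x hx, hgs01 x hx, abs_of_pos hx.1]
  have hRint01 : IntervalIntegrable (fun x =>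
      (fr x + fs x) * (-(gr'' x) + ((ν ^ 2 - 1/4) / x ^ 2) * gr x
        + ((n : ℝ) * π) ^ 2 * |x| ^ (2*γ) * (gr x + gs x))) volume 0 1 := by
    rw [intervalIntegrable_iff, Set.uIoc_of_le zero_le_one]
    rw [intervalIntegrable_iff, Set.uIoc_of_le zero_le_one] at hRn
    refine hRn.congr_fun (fun x hx => ?_) measurableSet_Ioc
    rw [hfs01 x hx, hgs01 x hx, abs_of_pos hx.1]
    ring
  have hLintM : IntervalIntegrable (fun x =>
      (-(fr'' x) + ((ν ^ 2 - 1/4) / x ^ 2) * fr x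
        + ((n : ℝ) * π) ^ 2 * |x| ^ (2*γ) * (fr x + fs x)) * (gr x + gs x)) volume (-1) 0 := by
    refine reflInt' ?_
    rw [intervalIntegrable_iff, Set.uIoc_of_le zero_le_one]
    rw [intervalIntegrable_iff, Set.uIoc_of_le zero_le_one] at hLnM
    refine hLnM.congr_fun (fun x hx => ?_) measurableSet_Ioc
    rw [hfsM01 x hx, hgsM01 x hx, abs_neg, abs_of_pos hx.1, neg_sq]
  have hRintM : IntervalIntegrable (fun x =>
      (fr x + fs x) * (-(gr'' x) + ((ν ^ 2 - 1/4) / x ^ 2) * gr x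
        + ((n : ℝ) * π) ^ 2 * |x| ^ (2*γ) * (gr x + gs x))) volume (-1) 0 := by
    refine reflInt' ?_
    rw [intervalIntegrable_iff, Set.uIoc_of_le zero_le_one]
    rw [intervalIntegrable_iff, Set.uIoc_of_le zero_le_one] at hRnM
    refine hRnM.congr_fun (fun x hx => ?_) measurableSet_Ioc
    rw [hfsM01 x hx, hgsM01 x hx, abs_neg, abs_of_pos hx.1, neg_sq]
    ring
  -- pointwise identity (L - R) = Dfun on the positive side
  have hpoint : ∀ x ∈ Set.Ioc (0:ℝ) 1, ∀ u u'' w w'' : ℝ → ℝ, ∀ p₁ p₂ q₁ q₂ : ℝ,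
      (-(u'' x) + ((ν ^ 2 - 1/4) / x ^ 2) * u x
          + ((n : ℝ) * π) ^ 2 * x ^ (2*γ) * (u x + sng2 p₁ p₂ (ν + 1/2) (-ν + 1/2) x))
          * (w x + sng2 q₁ q₂ (ν + 1/2) (-ν + 1/2) x)
        - (u x + sng2 p₁ p₂ (ν + 1/2) (-ν + 1/2) x)
          * (-(w'' x) + ((ν ^ 2 - 1/4) / x ^ 2) * w x
            + ((n : ℝ) * π) ^ 2 * x ^ (2*γ) * (w x + sng2 q₁ q₂ (ν + 1/2) (-ν + 1/2) x))
      = Dfun (ν + 1/2) (-ν + 1/2) p₁ p₂ q₁ q₂ u u'' w w'' x := by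
    intro x hx u u'' w w'' p₁ p₂ q₁ q₂
    have hx0 : 0 < x := hx.1
    have hx2 : (x:ℝ) ^ (2:ℕ) = x ^ (2:ℝ) := by
      rw [← Real.rpow_natCast x 2]; norm_num
    have hxr : x ^ (ν + 1/2 - 1 - 1) * x ^ (2:ℕ) = x ^ (ν + 1/2) := by
      rw [hx2, ← Real.rpow_add hx0]; congr 1; ring
    have hxs : x ^ (-ν + 1/2 - 1 - 1) * x ^ (2:ℕ) = x ^ (-ν + 1/2) := by
      rw [hx2, ← Real.rpow_add hx0]; congr 1; ring
    have hx2ne : (x:ℝ) ^ (2:ℕ) ≠ 0 := pow_ne_zero 2 hx0.ne'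
    simp only [Dfun, sng2]
    rw [← hxr, ← hxs]
    field_simp
    ring
  -- halves of the difference
  have hdiffP : (∫ x in (0:ℝ)..1,
        (-(fr'' x) + ((ν ^ 2 - 1/4) / x ^ 2) * fr x
          + ((n : ℝ) * π) ^ 2 * |x| ^ (2*γ) * (fr x + fs x)) * (gr x + gs x))
      - (∫ x in (0:ℝ)..1,
        (fr x + fs x) * (-(gr'' x) + ((ν ^ 2 - 1/4) / x ^ 2) * gr x
          + ((n : ℝ) * π) ^ 2 * |x| ^ (2*γ) * (gr x + gs x)))
      = Bfun (ν + 1/2) (-ν + 1/2) a₁ a₂ d₁ d₂ fr fr' gr gr' 1 := by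
    rw [← intervalIntegral.integral_sub hLint01 hRint01]
    rw [← posP.2]
    rw [intervalIntegral.integral_of_le zero_le_one,
      intervalIntegral.integral_of_le zero_le_one]
    refine setIntegral_congr_fun measurableSet_Ioc fun x hx => ?_
    rw [hfs01 x hx, hgs01 x hx, abs_of_pos hx.1]
    exact hpoint x hx fr fr'' gr gr'' a₁ a₂ d₁ d₂
  have hdiffM : (∫ x in (-1:ℝ)..0,
        (-(fr'' x) + ((ν ^ 2 - 1/4) / x ^ 2) * fr x
          + ((n : ℝ) * π) ^ 2 * |x| ^ (2*γ) * (fr x + fs x)) * (gr x + gs x))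
      - (∫ x in (-1:ℝ)..0,
        (fr x + fs x) * (-(gr'' x) + ((ν ^ 2 - 1/4) / x ^ 2) * gr x
          + ((n : ℝ) * π) ^ 2 * |x| ^ (2*γ) * (gr x + gs x)))
      = Bfun (ν + 1/2) (-ν + 1/2) b₁ b₂ e₁ e₂ (fun x => fr (-x)) (fun x => -fr' (-x))
          (fun x => gr (-x)) (fun x => -gr' (-x)) 1 := by
    rw [← intervalIntegral.integral_sub hLintM hRintM]
    have hflip : ∫ x in (-1:ℝ)..0,
        ((-(fr'' x) + ((ν ^ 2 - 1/4) / x ^ 2) * fr x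
          + ((n : ℝ) * π) ^ 2 * |x| ^ (2*γ) * (fr x + fs x)) * (gr x + gs x)
        - (fr x + fs x) * (-(gr'' x) + ((ν ^ 2 - 1/4) / x ^ 2) * gr x
          + ((n : ℝ) * π) ^ 2 * |x| ^ (2*γ) * (gr x + gs x)))
        = ∫ x in (0:ℝ)..1,
        ((-(fr'' (-x)) + ((ν ^ 2 - 1/4) / (-x) ^ 2) * fr (-x)
          + ((n : ℝ) * π) ^ 2 * |(-x)| ^ (2*γ) * (fr (-x) + fs (-x))) * (gr (-x) + gs (-x))
        - (fr (-x) + fs (-x)) * (-(gr'' (-x)) + ((ν ^ 2 - 1/4) / (-x) ^ 2) * gr (-x)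
          + ((n : ℝ) * π) ^ 2 * |(-x)| ^ (2*γ) * (gr (-x) + gs (-x)))) := by
      have h := intervalIntegral.integral_comp_neg (a := (0:ℝ)) (b := 1)
        (f := fun x =>
          (-(fr'' x) + ((ν ^ 2 - 1/4) / x ^ 2) * fr x
            + ((n : ℝ) * π) ^ 2 * |x| ^ (2*γ) * (fr x + fs x)) * (gr x + gs x)
          - (fr x + fs x) * (-(gr'' x) + ((ν ^ 2 - 1/4) / x ^ 2) * gr x
            + ((n : ℝ) * π) ^ 2 * |x| ^ (2*γ) * (gr x + gs x)))
      rw [neg_zero] at h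
      exact h.symm
    rw [hflip, ← posM.2, intervalIntegral.integral_of_le zero_le_one,
      intervalIntegral.integral_of_le zero_le_one]
    refine setIntegral_congr_fun measurableSet_Ioc fun x hx => ?_
    rw [hfsM01 x hx, hgsM01 x hx, abs_neg, abs_of_pos hx.1, neg_sq]
    exact hpoint x hx (fun x => fr (-x)) (fun x => fr'' (-x)) (fun x => gr (-x))
      (fun x => gr'' (-x)) b₁ b₂ e₁ e₂
  -- boundary values
  have hfs1 : fs 1 = a₁ + a₂ := by
    have h := hfsP 1 (by norm_num)
    simpa using h
  have hgs1 : gs 1 = d₁ + d₂ := by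
    have h := hgsP 1 (by norm_num)
    simpa using h
  have hfsm1 : fs (-1) = b₁ + b₂ := by
    have h := hfsM (-1) (by norm_num)
    simpa using h
  have hgsm1 : gs (-1) = e₁ + e₂ := by
    have h := hgsM (-1) (by norm_num)
    simpa using h
  have hfr1 : fr 1 = -(a₁ + a₂) := by rw [hfs1] at hf1; linarith
  have hgr1 : gr 1 = -(d₁ + d₂) := by rw [hgs1] at hg1; linarith
  have hfrm1 : fr (-1) = -(b₁ + b₂) := by rw [hfsm1] at hfm1; linarith
  have hgrm1 : gr (-1) = -(e₁ + e₂) := by rw [hgsm1] at hgm1; linarith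
  -- vanishing of the sum of the two boundary brackets
  have h2 : ν * b₁ - ν * b₂ = ν * a₁ - ν * a₂ + a₁ + a₂ := by
    linear_combination hfT2 - (1/2) * hfT1
  have h4 : ν * e₁ - ν * e₂ = ν * d₁ - ν * d₂ + d₁ + d₂ := by
    linear_combination hgT2 - (1/2) * hgT1
  have hBsum : Bfun (ν + 1/2) (-ν + 1/2) a₁ a₂ d₁ d₂ fr fr' gr gr' 1
      + Bfun (ν + 1/2) (-ν + 1/2) b₁ b₂ e₁ e₂ (fun x => fr (-x)) (fun x => -fr' (-x))
          (fun x => gr (-x)) (fun x => -gr' (-x)) 1 = 0 := by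
    simp only [Bfun, sng2, Real.one_rpow, mul_one]
    rw [hfr1, hgr1, hfrm1, hgrm1]
    linear_combination (ν * (e₂ - e₁)) * hfT1 + (e₁ + e₂) * h2
      + (ν * (a₁ - a₂) + (a₁ + a₂)) * hgT1 + (a₁ + a₂) * h4
  -- assemble
  rw [← intervalIntegral.integral_add_adjacent_intervals hLintM hLint01,
    ← intervalIntegral.integral_add_adjacent_intervals hRintM hRint01]
  linarith [hdiffP, hdiffM, hBsum]
end
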